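/- arXiv:2206.13777 — 6 statements merged into one kernel-verified Lean document; each statement's English description precedes it below -/
import Mathlib

section
/- Assume there exists a positive radially symmetric C² function U : ℝ³ → ℝ with ∫_{ℝ³}(|∇U|² + U²) < ∞ such that every positive C² solution v of −Δv + v = v^{q−1} on ℝ³ with ∫_{ℝ³}(|∇v|² + v²) < ∞ equals U(· − z) for some z ∈ ℝ³. Then for any two positive C² solutions u₁, u₂ of −(a + bk∫_{ℝ³}|∇u|²)Δu + u = Q₀ u^{q−1} on ℝ³ with ∫_{ℝ³}(|∇u_i|² + u_i²) < ∞ (i = 1, 2), one has ∫_{ℝ³}|∇u₁|² = ∫_{ℝ³}|∇u₂|²; more precisely, the number c = a + bk∫_{ℝ³}|∇u_i|² is the same for i = 1, 2 and satisfies √c = (b̃ + √(b̃² + 4a))/2, where b̃ = bk Q₀^{−2/(q−2)} ∫_{ℝ³}|∇U|². -/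
set_option maxHeartbeats 1000000

open MeasureTheory Real Filter InnerProductSpace

noncomputable section

abbrev E3 : Type := EuclideanSpace ℝ (Fin 3)

/-- The Laplacian of `u : ℝ³ → ℝ`, as the sum of the second partial derivatives. -/
def lap (u : E3 → ℝ) (x : E3) : ℝ :=
  ∑ i : Fin 3, iteratedFDeriv ℝ 2 u x ![EuclideanSpace.single i 1, EuclideanSpace.single i 1]

/-- The square of the norm `‖u‖_ε`. -/
def normESq (ε a : ℝ) (u : E3 → ℝ) : ℝ :=
  ∫ x : E3, (ε ^ 2 * a * ‖gradient u x‖ ^ 2 + (u x) ^ 2)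

/-- The norm `‖u‖_ε`. -/
def normE (ε a : ℝ) (u : E3 → ℝ) : ℝ := Real.sqrt (normESq ε a u)

/-- `‖u‖_ε < ∞`. -/
def FiniteE (ε a : ℝ) (u : E3 → ℝ) : Prop :=
  Integrable (fun x : E3 => ε ^ 2 * a * ‖gradient u x‖ ^ 2 + (u x) ^ 2)

lemma grad_smul (u : E3 → ℝ) (hu : ContDiff ℝ 2 u) (μ s : ℝ) (x : E3) :
    gradient (fun y => μ * u (s • y)) x = (μ * s) • gradient u (s • x) := by
  have hd : DifferentiableAt ℝ u (s • x) :=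
    (hu.differentiable (by norm_num)).differentiableAt
  have hf : HasFDerivAt u (toDual ℝ E3 (gradient u (s • x))) (s • x) :=
    hd.hasGradientAt.hasFDerivAt
  have hL : HasFDerivAt (fun y : E3 => s • y) (s • ContinuousLinearMap.id ℝ E3) x :=
    (hasFDerivAt_id x).const_smul s
  have h3 := (hf.comp x hL).const_mul μ
  have heq : μ • ((toDual ℝ E3 (gradient u (s • x))).comp
      (s • ContinuousLinearMap.id ℝ E3)) = toDual ℝ E3 ((μ * s) • gradient u (s • x)) := by
    ext y
    simp [mul_comm, mul_assoc, mul_left_comm, real_inner_smul_left]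
  rw [heq] at h3
  exact (hasGradientAt_iff_hasFDerivAt.2 h3).gradient

lemma grad_translate (U : E3 → ℝ) (hU : ContDiff ℝ 2 U) (z x : E3) :
    gradient (fun y => U (y - z)) x = gradient U (x - z) := by
  have hd : DifferentiableAt ℝ U (x - z) :=
    (hU.differentiable (by norm_num)).differentiableAt
  have hf : HasFDerivAt U (toDual ℝ E3 (gradient U (x - z))) (x - z) :=
    hd.hasGradientAt.hasFDerivAt
  have hL : HasFDerivAt (fun y : E3 => y - z) (ContinuousLinearMap.id ℝ E3) x :=
    (hasFDerivAt_id x).sub_const z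
  have h2 := hf.comp x hL
  rw [ContinuousLinearMap.comp_id] at h2
  exact (hasGradientAt_iff_hasFDerivAt.2 h2).gradient

lemma lap_scale (u : E3 → ℝ) (hu : ContDiff ℝ 2 u) (μ s : ℝ) (x : E3) :
    lap (fun y => μ * u (s • y)) x = μ * (s ^ 2 * lap u (s • x)) := by
  set L : E3 →L[ℝ] E3 := s • ContinuousLinearMap.id ℝ E3 with hL
  have hcomp : ContDiff ℝ 2 (u ∘ L) := hu.comp L.contDiff
  have h1 : (fun y => μ * u (s • y)) = fun y => μ • (u ∘ L) y := by
    funext y; simp [hL]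
  rw [lap, h1]
  have hLx : L x = s • x := by simp [hL]
  have key : ∀ i : Fin 3,
      iteratedFDeriv ℝ 2 (fun y => μ • (u ∘ L) y) x
        ![EuclideanSpace.single i 1, EuclideanSpace.single i 1]
      = μ * (s ^ 2 * iteratedFDeriv ℝ 2 u (s • x)
          ![EuclideanSpace.single i 1, EuclideanSpace.single i 1]) := by
    intro i
    rw [iteratedFDeriv_const_smul_apply' hcomp.contDiffAt]
    rw [L.iteratedFDeriv_comp_right hu x (by norm_num)]
    have h2 : (fun j : Fin 2 => L (![EuclideanSpace.single i 1,
        EuclideanSpace.single i 1] j))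
        = fun j => s • (![(EuclideanSpace.single i 1 : E3),
            EuclideanSpace.single i 1] j) := by
      funext j; simp [hL]
    rw [ContinuousMultilinearMap.smul_apply,
      ContinuousMultilinearMap.compContinuousLinearMap_apply]
    rw [h2, ContinuousMultilinearMap.map_smul_univ]
    simp [hLx, smul_eq_mul]
  rw [lap, Finset.mul_sum, Finset.mul_sum]
  exact Finset.sum_congr rfl fun i _ => key i

lemma key_lemma (k : ℕ) (hk : 0 < k) (a b : ℝ) (ha : 0 < a) (hb : 0 < b)
    (q : ℝ) (hq1 : 2 < q) (Q0 : ℝ) (hQ0 : 0 < Q0)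
    (U : E3 → ℝ) (hUC2 : ContDiff ℝ 2 U)
    (hUuniq : ∀ v : E3 → ℝ, (∀ x, 0 < v x) → ContDiff ℝ 2 v →
        (Integrable fun x : E3 => ‖gradient v x‖ ^ 2 + (v x) ^ 2) →
        (∀ x, -lap v x + v x = (v x) ^ (q - 1)) →
        ∃ z : E3, ∀ x, v x = U (x - z))
    (u : E3 → ℝ)
    (hpos : ∀ x, 0 < u x) (hC2 : ContDiff ℝ 2 u)
    (hint : Integrable fun x : E3 => ‖gradient u x‖ ^ 2 + (u x) ^ 2)
    (heq : ∀ x, -(a + b * k * ∫ z : E3, ‖gradient u z‖ ^ 2) * lap u x + u x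
        = Q0 * (u x) ^ (q - 1)) :
    Real.sqrt (a + b * k * ∫ z : E3, ‖gradient u z‖ ^ 2)
      = ((b * k * Q0 ^ (-2 / (q - 2)) * ∫ z : E3, ‖gradient U z‖ ^ 2)
          + Real.sqrt ((b * k * Q0 ^ (-2 / (q - 2)) * ∫ z : E3, ‖gradient U z‖ ^ 2) ^ 2
              + 4 * a)) / 2 := by
  have hq20 : q - 2 ≠ 0 := by intro h; linarith [sub_eq_zero.1 h]
  set T := ∫ z : E3, ‖gradient u z‖ ^ 2 with hTdef
  have hT0 : 0 ≤ T := by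
    rw [hTdef]; exact integral_nonneg fun x => by positivity
  set c := a + b * (k : ℝ) * T with hcdef
  have hc : 0 < c := by
    have : 0 ≤ b * (k : ℝ) * T := by positivity
    rw [hcdef]; linarith
  set s := Real.sqrt c with hsdef
  have hs : 0 < s := Real.sqrt_pos.2 hc
  have hs2 : s ^ 2 = c := Real.sq_sqrt hc.le
  set μ := Q0 ^ (q - 2)⁻¹ with hμdef
  have hμ : 0 < μ := Real.rpow_pos_of_pos hQ0 _
  have hμq : μ ^ (q - 2) = Q0 := by
    rw [hμdef, ← Real.rpow_mul hQ0.le, inv_mul_cancel₀ hq20, Real.rpow_one]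
  set v := fun x : E3 => μ * u (s • x) with hvdef
  have hgradv : ∀ x, gradient v x = (μ * s) • gradient u (s • x) := by
    intro x; rw [hvdef]; exact grad_smul u hC2 μ s x
  have hnormgrad : ∀ x, ‖gradient v x‖ ^ 2 = (μ * s) ^ 2 * ‖gradient u (s • x)‖ ^ 2 := by
    intro x; rw [hgradv x, norm_smul, Real.norm_eq_abs, mul_pow, sq_abs]
  -- integrability of pieces
  have hcontgrad : Continuous (gradient u) := by
    have h1 : Continuous (fderiv ℝ u) := hC2.continuous_fderiv (by norm_num)
    have h2 : gradient u = fun x => (toDual ℝ E3).symm (fderiv ℝ u x) := rfl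
    rw [h2]; exact (toDual ℝ E3).symm.continuous.comp h1
  have hint1 : Integrable fun x : E3 => ‖gradient u x‖ ^ 2 := by
    refine hint.mono (hcontgrad.norm.pow 2).aestronglyMeasurable
      (Eventually.of_forall fun x => ?_)
    simp only [Real.norm_eq_abs]
    rw [abs_of_nonneg (by positivity), abs_of_nonneg (by positivity)]
    nlinarith [sq_nonneg (u x)]
  have hint2 : Integrable fun x : E3 => (u x) ^ 2 := by
    refine hint.mono ((hC2.continuous.pow 2)).aestronglyMeasurable
      (Eventually.of_forall fun x => ?_)
    simp only [Real.norm_eq_abs]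
    rw [abs_of_nonneg (by positivity), abs_of_nonneg (by positivity)]
    nlinarith [sq_nonneg ‖gradient u x‖]
  -- properties of v
  have hvpos : ∀ x, 0 < v x := fun x => mul_pos hμ (hpos _)
  have hvC2 : ContDiff ℝ 2 v := by
    rw [hvdef]
    have : ContDiff ℝ 2 (u ∘ (s • ContinuousLinearMap.id ℝ E3)) :=
      hC2.comp (s • ContinuousLinearMap.id ℝ E3).contDiff
    exact contDiff_const.mul (this : ContDiff ℝ 2 fun x => u (s • x))
  have hvint : Integrable fun x : E3 => ‖gradient v x‖ ^ 2 + (v x) ^ 2 := by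
    have h1 : (fun x : E3 => ‖gradient v x‖ ^ 2 + (v x) ^ 2)
        = fun x => (μ * s) ^ 2 * ‖gradient u (s • x)‖ ^ 2 + μ ^ 2 * (u (s • x)) ^ 2 := by
      funext x; rw [hnormgrad x]; simp only [hvdef]; ring
    rw [h1]
    exact ((hint1.comp_smul hs.ne').const_mul _).add ((hint2.comp_smul hs.ne').const_mul _)
  have hveq : ∀ x, -lap v x + v x = (v x) ^ (q - 1) := by
    intro x
    simp only [hvdef]
    rw [lap_scale u hC2 μ s x, hs2]
    rw [Real.mul_rpow hμ.le (hpos _).le]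
    have hμ1 : μ ^ (q - 1) = μ * Q0 := by
      rw [show q - 1 = 1 + (q - 2) by ring, Real.rpow_add hμ, Real.rpow_one, hμq]
    rw [hμ1]
    linear_combination μ * (heq (s • x))
  obtain ⟨z, hz⟩ := hUuniq v hvpos hvC2 hvint hveq
  set S := ∫ z : E3, ‖gradient U z‖ ^ 2 with hSdef
  have hS0 : 0 ≤ S := by
    rw [hSdef]; exact integral_nonneg fun x => by positivity
  have hI1 : (∫ x : E3, ‖gradient v x‖ ^ 2) = (μ * s) ^ 2 * ((s ^ 3)⁻¹ * T) := by
    have h1 : (fun x : E3 => ‖gradient v x‖ ^ 2)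
        = fun x => (μ * s) ^ 2 * ‖gradient u (s • x)‖ ^ 2 := funext fun x => hnormgrad x
    rw [congrArg (fun f : E3 → ℝ => ∫ x : E3, f x) h1, integral_const_mul,
      Measure.integral_comp_smul_of_nonneg volume
        (fun y : E3 => ‖gradient u y‖ ^ 2) s (hR := hs.le)]
    rw [hTdef]
    simp [smul_eq_mul, finrank_euclideanSpace_fin]
  have hI2 : (∫ x : E3, ‖gradient v x‖ ^ 2) = S := by
    have h1 : (fun x : E3 => ‖gradient v x‖ ^ 2) = fun x => ‖gradient U (x - z)‖ ^ 2 := by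
      funext x
      have hvfun : v = fun y => U (y - z) := funext hz
      rw [hvfun, grad_translate U hUC2 z x]
    rw [congrArg (fun f : E3 → ℝ => ∫ x : E3, f x) h1, hSdef]
    exact integral_sub_right_eq_self (μ := volume) (fun y : E3 => ‖gradient U y‖ ^ 2) z
  have h5 : (μ * s) ^ 2 * ((s ^ 3)⁻¹ * T) = S := hI1.symm.trans hI2
  have h4 : μ ^ 2 * T = S * s := by
    have hid : (μ * s) ^ 2 * ((s ^ 3)⁻¹ * T) * s = μ ^ 2 * T := by
      field_simp
    calc μ ^ 2 * T = (μ * s) ^ 2 * ((s ^ 3)⁻¹ * T) * s := hid.symm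
      _ = S * s := by rw [h5]
  set B := b * (k : ℝ) * Q0 ^ (-2 / (q - 2)) * S with hBdef
  have hQμ : Q0 ^ (-2 / (q - 2)) * μ ^ 2 = 1 := by
    have h1 : μ ^ 2 = Q0 ^ (2 / (q - 2)) := by
      rw [hμdef, ← Real.rpow_natCast (Q0 ^ (q - 2)⁻¹) 2, ← Real.rpow_mul hQ0.le]
      congr 1
      push_cast
      field_simp
    rw [h1, ← Real.rpow_add hQ0]
    rw [show -2 / (q - 2) + 2 / (q - 2) = 0 by ring, Real.rpow_zero]
  have hQinv : Q0 ^ (-2 / (q - 2)) = (μ ^ 2)⁻¹ := eq_inv_of_mul_eq_one_left hQμ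
  have hB0 : 0 ≤ B := by
    rw [hBdef]
    exact mul_nonneg (by positivity) hS0
  have hcB : c = a + B * s := by
    rw [hcdef, hBdef, hQinv]
    have hμ20 : μ ^ 2 ≠ 0 := by positivity
    field_simp
    linear_combination b * (k : ℝ) * h4
  have hquad : s ^ 2 = a + B * s := hs2.trans hcB
  have hsB : B < s := by nlinarith [hquad, hs, ha]
  have hroot : Real.sqrt (B ^ 2 + 4 * a) = 2 * s - B := by
    rw [show B ^ 2 + 4 * a = (2 * s - B) ^ 2 by nlinarith [hquad],
      Real.sqrt_sq (by linarith)]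
  rw [hroot]
  ring

theorem statement3 (k : ℕ) (hk : 0 < k) (a b : ℝ) (ha : 0 < a) (hb : 0 < b)
    (q : ℝ) (hq1 : 2 < q) (hq2 : q < 6) (Q0 : ℝ) (hQ0 : 0 < Q0)
    (U : E3 → ℝ) (hUpos : ∀ x, 0 < U x)
    (hUrad : ∀ x y : E3, ‖x‖ = ‖y‖ → U x = U y)
    (hUC2 : ContDiff ℝ 2 U)
    (hUint : Integrable fun x : E3 => ‖gradient U x‖ ^ 2 + (U x) ^ 2)
    (hUuniq : ∀ v : E3 → ℝ, (∀ x, 0 < v x) → ContDiff ℝ 2 v →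
        (Integrable fun x : E3 => ‖gradient v x‖ ^ 2 + (v x) ^ 2) →
        (∀ x, -lap v x + v x = (v x) ^ (q - 1)) →
        ∃ z : E3, ∀ x, v x = U (x - z))
    (u₁ u₂ : E3 → ℝ)
    (h1pos : ∀ x, 0 < u₁ x) (h1C2 : ContDiff ℝ 2 u₁)
    (h1int : Integrable fun x : E3 => ‖gradient u₁ x‖ ^ 2 + (u₁ x) ^ 2)
    (h1eq : ∀ x, -(a + b * k * ∫ z : E3, ‖gradient u₁ z‖ ^ 2) * lap u₁ x + u₁ x
        = Q0 * (u₁ x) ^ (q - 1))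
    (h2pos : ∀ x, 0 < u₂ x) (h2C2 : ContDiff ℝ 2 u₂)
    (h2int : Integrable fun x : E3 => ‖gradient u₂ x‖ ^ 2 + (u₂ x) ^ 2)
    (h2eq : ∀ x, -(a + b * k * ∫ z : E3, ‖gradient u₂ z‖ ^ 2) * lap u₂ x + u₂ x
        = Q0 * (u₂ x) ^ (q - 1)) :
    (∫ z : E3, ‖gradient u₁ z‖ ^ 2) = (∫ z : E3, ‖gradient u₂ z‖ ^ 2) ∧
    (a + b * k * ∫ z : E3, ‖gradient u₁ z‖ ^ 2)
      = (a + b * k * ∫ z : E3, ‖gradient u₂ z‖ ^ 2) ∧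
    Real.sqrt (a + b * k * ∫ z : E3, ‖gradient u₁ z‖ ^ 2)
      = ((b * k * Q0 ^ (-2 / (q - 2)) * ∫ z : E3, ‖gradient U z‖ ^ 2)
          + Real.sqrt ((b * k * Q0 ^ (-2 / (q - 2)) * ∫ z : E3, ‖gradient U z‖ ^ 2) ^ 2
              + 4 * a)) / 2 := by
  have k1 := key_lemma k hk a b ha hb q hq1 Q0 hQ0 U hUC2 hUuniq u₁ h1pos h1C2 h1int h1eq
  have k2 := key_lemma k hk a b ha hb q hq1 Q0 hQ0 U hUC2 hUuniq u₂ h2pos h2C2 h2int h2eq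
  have hT1 : 0 ≤ ∫ z : E3, ‖gradient u₁ z‖ ^ 2 := integral_nonneg fun x => by positivity
  have hT2 : 0 ≤ ∫ z : E3, ‖gradient u₂ z‖ ^ 2 := integral_nonneg fun x => by positivity
  have hc1 : 0 ≤ a + b * k * ∫ z : E3, ‖gradient u₁ z‖ ^ 2 :=
    add_nonneg ha.le (mul_nonneg (by positivity) hT1)
  have hc2 : 0 ≤ a + b * k * ∫ z : E3, ‖gradient u₂ z‖ ^ 2 :=
    add_nonneg ha.le (mul_nonneg (by positivity) hT2)
  have hsq := k1.trans k2.symm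
  have hceq : (a + b * k * ∫ z : E3, ‖gradient u₁ z‖ ^ 2)
      = (a + b * k * ∫ z : E3, ‖gradient u₂ z‖ ^ 2) := by
    rw [← Real.sq_sqrt hc1, ← Real.sq_sqrt hc2, hsq]
  have hTeq : (∫ z : E3, ‖gradient u₁ z‖ ^ 2) = ∫ z : E3, ‖gradient u₂ z‖ ^ 2 := by
    have h := add_left_cancel hceq
    exact mul_left_cancel₀ (by positivity) h
  exact ⟨hTeq, hceq, k1⟩

end
end

section
/- Let n ≥ 1, a, a′ ∈ ℝ and 0 < b < b′. Let u, u′ : ℝⁿ → ℝ be positive continuous radial functions such that for some constants c₂ ≥ c₁ > 0 one has c₁|x|^a e^{−b|x|} ≤ u(x) ≤ c₂|x|^a e^{−b|x|} and c₁|x|^{a′} e^{−b′|x|} ≤ u′(x) ≤ c₂|x|^{a′} e^{−b′|x|} for all |x| ≥ 1, and suppose ∫_{ℝⁿ} u(x−ξ)u′(x)dx is finite for all ξ. Then there exist constants C₂ ≥ C₁ > 0 and R > 0 such that for every ξ ∈ ℝⁿ with |ξ| ≥ R: C₁ e^{−b|ξ|}|ξ|^a ≤ ∫_{ℝⁿ}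 u(x−ξ)u′(x)dx ≤ C₂ e^{−b|ξ|}|ξ|^a. -/
open MeasureTheory Real Filter

lemma aux_bdd (s ε : ℝ) (hε : 0 < ε) :
    ∃ K : ℝ, 0 < K ∧ ∀ t : ℝ, 0 ≤ t → (1 + t) ^ s * Real.exp (-ε * t) ≤ K := by
  have h0 := tendsto_rpow_mul_exp_neg_mul_atTop_nhds_zero s ε hε
  have h1 : ∀ᶠ x : ℝ in atTop, x ^ s * Real.exp (-ε * x) < 1 :=
    h0.eventually_lt_const one_pos
  obtain ⟨T, hT⟩ := h1.exists_forall_of_atTop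
  set M := max 1 T with hM
  have hcont : ContinuousOn (fun t : ℝ => t ^ s * Real.exp (-ε * t)) (Set.Icc 1 M) := by
    apply ContinuousOn.mul
    · intro t ht
      exact (Real.continuousAt_rpow_const t s (Or.inl (by linarith [ht.1]))).continuousWithinAt
    · exact ((Real.continuous_exp.comp (continuous_const.mul continuous_id)).continuousOn)
  obtain ⟨t0, _, hmax⟩ := (isCompact_Icc (a := (1:ℝ)) (b := M)).exists_isMaxOn
    ⟨1, Set.left_mem_Icc.2 (le_max_left 1 T)⟩ hcont
  refine ⟨Real.exp ε * max 1 (t0 ^ s * Real.exp (-ε * t0)), by positivity, fun t ht => ?_⟩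
  have key : (1 + t) ^ s * Real.exp (-ε * (1 + t)) ≤ max 1 (t0 ^ s * Real.exp (-ε * t0)) := by
    rcases le_or_gt (1 + t) M with h | h
    · exact le_trans (hmax ⟨by linarith, h⟩) (le_max_right _ _)
    · exact le_trans (hT (1 + t) (le_trans (le_max_right 1 T) h.le)).le (le_max_left _ _)
  calc (1 + t) ^ s * Real.exp (-ε * t)
      = Real.exp ε * ((1 + t) ^ s * Real.exp (-ε * (1 + t))) := by
        have he : Real.exp ε * Real.exp (-ε * (1 + t)) = Real.exp (-ε * t) := by
          rw [← Real.exp_add]; congr 1; ring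
        rw [← he]; ring
    _ ≤ Real.exp ε * max 1 (t0 ^ s * Real.exp (-ε * t0)) := by
        apply mul_le_mul_of_nonneg_left key (Real.exp_pos _).le

lemma aux_int (n : ℕ) (q ε : ℝ) (hε : 0 < ε) :
    Integrable (fun x : EuclideanSpace ℝ (Fin n) => (1 + ‖x‖) ^ q * Real.exp (-ε * ‖x‖)) := by
  obtain ⟨K, hK, hKb⟩ := aux_bdd (q + (n + 1)) ε hε
  have hnr : (Module.finrank ℝ (EuclideanSpace ℝ (Fin n)) : ℝ) < (n : ℝ) + 1 := by
    simp [finrank_euclideanSpace_fin]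
  have hint := (integrable_one_add_norm (μ := (volume : Measure (EuclideanSpace ℝ (Fin n))))
    (r := (n : ℝ) + 1) hnr).const_mul K
  refine hint.mono' ?_ ?_
  · apply Continuous.aestronglyMeasurable
    apply Continuous.mul
    · exact (continuous_const.add continuous_norm).rpow_const (fun x => Or.inl (by positivity : (0:ℝ) < 1 + ‖x‖).ne')
    · exact Real.continuous_exp.comp (continuous_const.mul continuous_norm)
  · refine ae_of_all _ fun x => ?_
    have h1 : (0:ℝ) < 1 + ‖x‖ := by positivity
    rw [Real.norm_of_nonneg (by positivity)]
    have : (1 + ‖x‖) ^ q = (1 + ‖x‖) ^ (q + ((n:ℝ) + 1)) * (1 + ‖x‖) ^ (-((n:ℝ) + 1)) := by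
      rw [← Real.rpow_add h1]; ring_nf
    rw [this]
    calc (1 + ‖x‖) ^ (q + ((n:ℝ) + 1)) * (1 + ‖x‖) ^ (-((n:ℝ) + 1)) * Real.exp (-ε * ‖x‖)
        = ((1 + ‖x‖) ^ (q + ((n:ℝ) + 1)) * Real.exp (-ε * ‖x‖)) * (1 + ‖x‖) ^ (-((n:ℝ) + 1)) := by
          ring
      _ ≤ K * (1 + ‖x‖) ^ (-((n:ℝ) + 1)) := by
          apply mul_le_mul_of_nonneg_right (hKb ‖x‖ (norm_nonneg x)) (by positivity)

lemma aux_glob (n : ℕ) (α β c₂ : ℝ) (hβ : 0 < β) (hc₂ : 0 < c₂)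
    (v : EuclideanSpace ℝ (Fin n) → ℝ) (hv : Continuous v)
    (hvb : ∀ x : EuclideanSpace ℝ (Fin n), 1 ≤ ‖x‖ →
      v x ≤ c₂ * ‖x‖ ^ α * Real.exp (-β * ‖x‖)) :
    ∃ D : ℝ, 0 < D ∧ ∀ x : EuclideanSpace ℝ (Fin n),
      v x ≤ D * (1 + ‖x‖) ^ (max α 0) * Real.exp (-β * ‖x‖) := by
  obtain ⟨x0, _, hmax⟩ := (isCompact_closedBall (0 : EuclideanSpace ℝ (Fin n)) 1).exists_isMaxOn
    ⟨0, Metric.mem_closedBall_self zero_le_one⟩ hv.continuousOn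
  set M := v x0 with hM
  refine ⟨max c₂ ((|M| + 1) * Real.exp β), lt_max_of_lt_right (by positivity), fun x => ?_⟩
  have hbase : (1:ℝ) ≤ 1 + ‖x‖ := by have := norm_nonneg x; linarith
  have hpow1 : (1:ℝ) ≤ (1 + ‖x‖) ^ (max α 0) := Real.one_le_rpow hbase (le_max_right _ _)
  rcases le_or_gt ‖x‖ 1 with h | h
  · have hvx : v x ≤ M := hmax (by simpa [Metric.mem_closedBall, dist_eq_norm] using h)
    have he : (1:ℝ) ≤ Real.exp β * Real.exp (-β * ‖x‖) := by
      rw [← Real.exp_add, ← Real.exp_zero]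
      apply Real.exp_le_exp.2; nlinarith
    calc v x ≤ M := hvx
      _ ≤ (|M| + 1) := by have := le_abs_self M; linarith
      _ ≤ (|M| + 1) * (Real.exp β * Real.exp (-β * ‖x‖)) := le_mul_of_one_le_right (by positivity) he
      _ = ((|M| + 1) * Real.exp β) * Real.exp (-β * ‖x‖) := by ring
      _ ≤ (max c₂ ((|M| + 1) * Real.exp β)) * (1 + ‖x‖) ^ (max α 0) * Real.exp (-β * ‖x‖) := by
          have h2 : (|M| + 1) * Real.exp β
              ≤ (max c₂ ((|M| + 1) * Real.exp β)) * (1 + ‖x‖) ^ (max α 0) :=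
            le_trans (le_max_right _ _)
              (le_mul_of_one_le_right (le_trans (by positivity) (le_max_right c₂ _)) hpow1)
          exact mul_le_mul_of_nonneg_right h2 (Real.exp_pos _).le
  · have hx1 : (1:ℝ) ≤ ‖x‖ := h.le
    have hpow : ‖x‖ ^ α ≤ (1 + ‖x‖) ^ (max α 0) := by
      rcases le_or_gt 0 α with hα | hα
      · rw [max_eq_left hα]
        exact Real.rpow_le_rpow (norm_nonneg x) (by linarith) hα
      · rw [max_eq_right hα.le, Real.rpow_zero]
        exact Real.rpow_le_one_of_one_le_of_nonpos hx1 hα.le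
    calc v x ≤ c₂ * ‖x‖ ^ α * Real.exp (-β * ‖x‖) := hvb x hx1
      _ ≤ (max c₂ ((|M| + 1) * Real.exp β)) * (1 + ‖x‖) ^ (max α 0) * Real.exp (-β * ‖x‖) := by
          apply mul_le_mul_of_nonneg_right _ (Real.exp_pos _).le
          exact mul_le_mul (le_max_left _ _) hpow (by positivity) (le_max_of_le_right (by positivity))

lemma div_rpow_eq (ν : ℝ) (hν : 0 < ν) (a : ℝ) : (ν / 2) ^ a = ν ^ a * 2 ^ (-a : ℝ) := by
  rw [div_eq_mul_inv, Real.mul_rpow (by linarith) (by norm_num),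
    Real.inv_rpow (by norm_num : (0:ℝ) ≤ 2), ← Real.rpow_neg (by norm_num : (0:ℝ) ≤ 2)]

lemma scalarA (a b b' c₂ D' α' ν r t : ℝ) (hb : 0 < b) (hc₂ : 0 < c₂) (hD' : 0 < D')
    (hν : 2 ≤ ν) (ht : 0 ≤ t) (hα' : 0 ≤ α')
    (hr0 : ν - t ≤ r) (hr1 : ν / 2 ≤ r) (hr2 : r ≤ 2 * ν) :
    c₂ * r ^ a * Real.exp (-b * r) * (D' * (1 + t) ^ α' * Real.exp (-b' * t)) ≤
      (c₂ * 2 ^ |a| * ν ^ a * Real.exp (-b * ν) * D') *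
        ((1 + t) ^ α' * Real.exp (-(b' - b) * t)) := by
  have hνpos : (0:ℝ) < ν := by linarith
  have hrpos : (0:ℝ) < r := by linarith
  have hpow : r ^ a ≤ 2 ^ |a| * ν ^ a := by
    rcases le_or_gt 0 a with ha | ha
    · rw [abs_of_nonneg ha]
      calc r ^ a ≤ (2 * ν) ^ a := Real.rpow_le_rpow hrpos.le hr2 ha
        _ = 2 ^ a * ν ^ a := Real.mul_rpow (by norm_num) hνpos.le
    · rw [abs_of_neg ha]
      calc r ^ a ≤ (ν / 2) ^ a :=
            Real.rpow_le_rpow_of_nonpos (by linarith) hr1 ha.le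
        _ = 2 ^ (-a) * ν ^ a := by rw [div_rpow_eq ν hνpos a]; ring
  have hexp : Real.exp (-b * r) ≤ Real.exp (-b * ν) * Real.exp (b * t) := by
    rw [← Real.exp_add]
    apply Real.exp_le_exp.2
    nlinarith [mul_nonneg hb.le (by linarith : (0:ℝ) ≤ r - (ν - t))]
  have h1 : r ^ a * Real.exp (-b * r) ≤ (2 ^ |a| * ν ^ a) * (Real.exp (-b * ν) * Real.exp (b * t)) :=
    mul_le_mul hpow hexp (Real.exp_pos _).le (by positivity)
  calc c₂ * r ^ a * Real.exp (-b * r) * (D' * (1 + t) ^ α' * Real.exp (-b' * t))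
      = (c₂ * D' * ((1 + t) ^ α' * Real.exp (-b' * t))) * (r ^ a * Real.exp (-b * r)) := by ring
    _ ≤ (c₂ * D' * ((1 + t) ^ α' * Real.exp (-b' * t))) *
        ((2 ^ |a| * ν ^ a) * (Real.exp (-b * ν) * Real.exp (b * t))) :=
        mul_le_mul_of_nonneg_left h1 (by positivity)
    _ = (c₂ * 2 ^ |a| * ν ^ a * Real.exp (-b * ν) * D') *
        ((1 + t) ^ α' * Real.exp (-(b' - b) * t)) := by
        rw [show -(b' - b) * t = b * t + -b' * t from by ring, Real.exp_add]; ring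

lemma scalarB (a b ε D D' α α' K₃ ν r t : ℝ) (hb : 0 < b) (hε : 0 < ε) (hD : 0 < D)
    (hD' : 0 < D') (hν : 2 ≤ ν) (hr : 0 ≤ r) (ht : 0 ≤ t) (hα : 0 ≤ α) (hα' : 0 ≤ α')
    (hνrt : ν ≤ r + t) (hrtν : r ≤ ν + t) (htB : ν / 2 ≤ t)
    (hK₃ : ∀ s : ℝ, 0 ≤ s → (1 + s) ^ (α + |a|) * Real.exp (-(ε/2) * s) ≤ K₃) :
    (D * (1 + r) ^ α * Real.exp (-b * r)) * (D' * (1 + t) ^ α' * Real.exp (-(b + 2*ε) * t)) ≤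
      (D * D' * K₃ * ν ^ a * Real.exp (-b * ν)) * ((1 + t) ^ (α + α') * Real.exp (-ε * t)) := by
  have hνpos : (0:ℝ) < ν := by linarith
  have hν1 : (1:ℝ) ≤ ν := by linarith
  have hK₃1 : (1:ℝ) ≤ K₃ := by have h := hK₃ 0 le_rfl; norm_num at h; exact h
  have hX : (1 + t) ^ α * (1 + t) ^ α' = (1 + t) ^ (α + α') :=
    (Real.rpow_add (by linarith) _ _).symm
  have hpow1 : (1 + r) ^ α ≤ (1 + ν) ^ α * (1 + t) ^ α := by
    calc (1 + r) ^ α ≤ ((1 + ν) * (1 + t)) ^ α :=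
          Real.rpow_le_rpow (by linarith) (by nlinarith) hα
      _ = (1 + ν) ^ α * (1 + t) ^ α := Real.mul_rpow (by linarith) (by linarith)
  have m1 : (1 + r) ^ α * (1 + t) ^ α' ≤ (1 + ν) ^ α * (1 + t) ^ (α + α') := by
    calc (1 + r) ^ α * (1 + t) ^ α' ≤ ((1 + ν) ^ α * (1 + t) ^ α) * (1 + t) ^ α' :=
          mul_le_mul_of_nonneg_right hpow1 (by positivity)
      _ = (1 + ν) ^ α * (1 + t) ^ (α + α') := by rw [mul_assoc, hX]
  have m2 : Real.exp (-b * r) * Real.exp (-(b + 2*ε) * t) ≤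
      Real.exp (-b * ν) * (Real.exp (-(ε/2) * ν) * Real.exp (-ε * t)) := by
    rw [← Real.exp_add, ← Real.exp_add, ← Real.exp_add]
    apply Real.exp_le_exp.2
    nlinarith [mul_nonneg hb.le (by linarith : (0:ℝ) ≤ r + t - ν),
      mul_nonneg hε.le (by linarith : (0:ℝ) ≤ t - ν / 2)]
  have hinv : (1 + ν) ^ (-|a|) ≤ ν ^ a := by
    rcases le_or_gt 0 a with ha | ha
    · rw [abs_of_nonneg ha]
      calc (1 + ν) ^ (-a) ≤ 1 :=
            Real.rpow_le_one_of_one_le_of_nonpos (by linarith) (by linarith)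
        _ ≤ ν ^ a := Real.one_le_rpow hν1 ha
    · rw [abs_of_neg ha, neg_neg]
      exact Real.rpow_le_rpow_of_nonpos hνpos (by linarith) ha.le
  have hkey : (1 + ν) ^ α * Real.exp (-(ε/2) * ν) ≤ K₃ * ν ^ a := by
    have hsplit : (1 + ν) ^ α = (1 + ν) ^ (α + |a|) * (1 + ν) ^ (-|a|) := by
      rw [← Real.rpow_add (by linarith)]; ring_nf
    calc (1 + ν) ^ α * Real.exp (-(ε/2) * ν)
        = ((1 + ν) ^ (α + |a|) * Real.exp (-(ε/2) * ν)) * (1 + ν) ^ (-|a|) := by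
          rw [hsplit]; ring
      _ ≤ K₃ * ν ^ a :=
          mul_le_mul (hK₃ ν (by linarith)) hinv (by positivity) (by linarith)
  calc (D * (1 + r) ^ α * Real.exp (-b * r)) * (D' * (1 + t) ^ α' * Real.exp (-(b + 2*ε) * t))
      = ((1 + r) ^ α * (1 + t) ^ α') * (Real.exp (-b * r) * Real.exp (-(b + 2*ε) * t)) *
          (D * D') := by ring
    _ ≤ ((1 + ν) ^ α * (1 + t) ^ (α + α')) *
        (Real.exp (-b * ν) * (Real.exp (-(ε/2) * ν) * Real.exp (-ε * t))) * (D * D') := by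
        apply mul_le_mul_of_nonneg_right _ (by positivity)
        exact mul_le_mul m1 m2 (by positivity) (by positivity)
    _ = ((1 + ν) ^ α * Real.exp (-(ε/2) * ν)) * ((1 + t) ^ (α + α') * Real.exp (-ε * t)) *
        (D * D' * Real.exp (-b * ν)) := by ring
    _ ≤ (K₃ * ν ^ a) * ((1 + t) ^ (α + α') * Real.exp (-ε * t)) *
        (D * D' * Real.exp (-b * ν)) := by
        apply mul_le_mul_of_nonneg_right (mul_le_mul_of_nonneg_right hkey (by positivity))
          (by positivity)
    _ = (D * D' * K₃ * ν ^ a * Real.exp (-b * ν)) * ((1 + t) ^ (α + α') * Real.exp (-ε * t)) := by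
        ring

lemma scalarL (a b c₁ m ν r : ℝ) (hb : 0 < b) (hc₁ : 0 < c₁) (hm : 0 < m) (hν : 2 ≤ ν)
    (hr1 : ν - 1 ≤ r) (hr2 : r ≤ ν + 1) :
    (c₁ * 2 ^ (-|a|) * Real.exp (-b) * m) * (Real.exp (-b * ν) * ν ^ a) ≤
      c₁ * r ^ a * Real.exp (-b * r) * m := by
  have hνpos : (0:ℝ) < ν := by linarith
  have hrpos : (0:ℝ) < r := by linarith
  have hpow : 2 ^ (-|a|) * ν ^ a ≤ r ^ a := by
    rcases le_or_gt 0 a with ha | ha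
    · rw [abs_of_nonneg ha]
      calc 2 ^ (-a) * ν ^ a = (ν / 2) ^ a := by rw [div_rpow_eq ν hνpos a]; ring
        _ ≤ r ^ a := Real.rpow_le_rpow (by positivity) (by linarith) ha
    · rw [abs_of_neg ha, neg_neg]
      calc 2 ^ a * ν ^ a = (2 * ν) ^ a := (Real.mul_rpow (by norm_num) hνpos.le).symm
        _ ≤ r ^ a := Real.rpow_le_rpow_of_nonpos hrpos (by linarith) ha.le
  have hexp : Real.exp (-b) * Real.exp (-b * ν) ≤ Real.exp (-b * r) := by
    rw [← Real.exp_add]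
    apply Real.exp_le_exp.2
    nlinarith [mul_nonneg hb.le (by linarith : (0:ℝ) ≤ ν + 1 - r)]
  calc (c₁ * 2 ^ (-|a|) * Real.exp (-b) * m) * (Real.exp (-b * ν) * ν ^ a)
      = (c₁ * m) * ((2 ^ (-|a|) * ν ^ a) * (Real.exp (-b) * Real.exp (-b * ν))) := by ring
    _ ≤ (c₁ * m) * (r ^ a * Real.exp (-b * r)) := by
        apply mul_le_mul_of_nonneg_left _ (by positivity)
        exact mul_le_mul hpow hexp (by positivity) (by positivity)
    _ = c₁ * r ^ a * Real.exp (-b * r) * m := by ring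

noncomputable section

theorem statement4 (n : ℕ) (hn : 1 ≤ n) (a a' b b' : ℝ) (hb : 0 < b) (hbb' : b < b')
    (u u' : EuclideanSpace ℝ (Fin n) → ℝ)
    (hupos : ∀ x, 0 < u x) (hu'pos : ∀ x, 0 < u' x)
    (hucont : Continuous u) (hu'cont : Continuous u')
    (hurad : ∀ x y : EuclideanSpace ℝ (Fin n), ‖x‖ = ‖y‖ → u x = u y)
    (hu'rad : ∀ x y : EuclideanSpace ℝ (Fin n), ‖x‖ = ‖y‖ → u' x = u' y)
    (c₁ c₂ : ℝ) (hc₁ : 0 < c₁) (hc : c₁ ≤ c₂)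
    (hub : ∀ x : EuclideanSpace ℝ (Fin n), 1 ≤ ‖x‖ →
      c₁ * ‖x‖ ^ a * Real.exp (-b * ‖x‖) ≤ u x ∧ u x ≤ c₂ * ‖x‖ ^ a * Real.exp (-b * ‖x‖))
    (hu'b : ∀ x : EuclideanSpace ℝ (Fin n), 1 ≤ ‖x‖ →
      c₁ * ‖x‖ ^ a' * Real.exp (-b' * ‖x‖) ≤ u' x ∧
        u' x ≤ c₂ * ‖x‖ ^ a' * Real.exp (-b' * ‖x‖))
    (hint : ∀ ξ : EuclideanSpace ℝ (Fin n), Integrable fun x => u (x - ξ) * u' x) :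
    ∃ C₁ C₂ R : ℝ, 0 < C₁ ∧ C₁ ≤ C₂ ∧ 0 < R ∧
      ∀ ξ : EuclideanSpace ℝ (Fin n), R ≤ ‖ξ‖ →
        C₁ * Real.exp (-b * ‖ξ‖) * ‖ξ‖ ^ a ≤ (∫ x, u (x - ξ) * u' x) ∧
        (∫ x, u (x - ξ) * u' x) ≤ C₂ * Real.exp (-b * ‖ξ‖) * ‖ξ‖ ^ a := by
  have hc₂ : 0 < c₂ := hc₁.trans_le hc
  obtain ⟨D, hD, hDb⟩ := aux_glob n a b c₂ hb hc₂ u hucont (fun x hx => (hub x hx).2)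
  obtain ⟨D', hD', hD'b⟩ := aux_glob n a' b' c₂ (hb.trans hbb') hc₂ u' hu'cont
    (fun x hx => (hu'b x hx).2)
  set α := max a 0 with hα
  set α' := max a' 0 with hα'
  have hα0 : 0 ≤ α := le_max_right a 0
  have hα'0 : 0 ≤ α' := le_max_right a' 0
  set ε := (b' - b) / 2 with hεdef
  have hε : 0 < ε := by rw [hεdef]; linarith
  have hb'eq : b' = b + 2 * ε := by rw [hεdef]; ring
  obtain ⟨K₃, hK₃pos, hK₃b⟩ := aux_bdd (α + |a|) (ε / 2) (by positivity)
  have hI₁int : Integrable (fun x : EuclideanSpace ℝ (Fin n) =>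
      (1 + ‖x‖) ^ α' * Real.exp (-(b' - b) * ‖x‖)) := aux_int n α' (b' - b) (by linarith)
  have hI₂int : Integrable (fun x : EuclideanSpace ℝ (Fin n) =>
      (1 + ‖x‖) ^ (α + α') * Real.exp (-ε * ‖x‖)) := aux_int n (α + α') ε hε
  set I₁ := ∫ x : EuclideanSpace ℝ (Fin n), (1 + ‖x‖) ^ α' * Real.exp (-(b' - b) * ‖x‖) with hI₁
  set I₂ := ∫ x : EuclideanSpace ℝ (Fin n),
    (1 + ‖x‖) ^ (α + α') * Real.exp (-ε * ‖x‖) with hI₂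
  have hI₁0 : 0 ≤ I₁ := integral_nonneg fun x => by positivity
  have hI₂0 : 0 ≤ I₂ := integral_nonneg fun x => by positivity
  obtain ⟨x1, _, hmin⟩ := (isCompact_closedBall (0 : EuclideanSpace ℝ (Fin n)) 1).exists_isMinOn
    ⟨0, Metric.mem_closedBall_self zero_le_one⟩ hu'cont.continuousOn
  set m := u' x1 with hm
  have hmpos : 0 < m := hu'pos x1
  set vol := (volume (Metric.ball (0 : EuclideanSpace ℝ (Fin n)) 1)).toReal with hvol
  have hvolpos : 0 < vol :=
    ENNReal.toReal_pos (Metric.measure_ball_pos volume 0 one_pos).ne' measure_ball_lt_top.ne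
  set C₁ := c₁ * 2 ^ (-|a|) * Real.exp (-b) * m * vol with hC₁
  have hC₁pos : 0 < C₁ := by have h2 : (0:ℝ) < 2 ^ (-|a|) := Real.rpow_pos_of_pos two_pos _
                             positivity
  set C₂ := c₂ * 2 ^ |a| * D' * I₁ + D * D' * K₃ * I₂ with hC₂
  refine ⟨C₁, max C₁ C₂, 2, hC₁pos, le_max_left _ _, two_pos, ?_⟩
  intro ξ hξ
  set ν := ‖ξ‖ with hν
  have hν2 : 2 ≤ ν := hξ
  have hνpos : (0:ℝ) < ν := by linarith
  have hνa : (0:ℝ) < ν ^ a := Real.rpow_pos_of_pos hνpos a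
  have hf := hint ξ
  have hfpos : ∀ x, 0 < u (x - ξ) * u' x := fun x => mul_pos (hupos _) (hu'pos _)
  constructor
  · -- lower bound
    have hconst : IntegrableOn (fun _ : EuclideanSpace ℝ (Fin n) =>
        (c₁ * 2 ^ (-|a|) * Real.exp (-b) * m) * (Real.exp (-b * ν) * ν ^ a))
        (Metric.ball (0 : EuclideanSpace ℝ (Fin n)) 1) :=
      integrableOn_const measure_ball_lt_top.ne
    have hle : ∀ x ∈ Metric.ball (0 : EuclideanSpace ℝ (Fin n)) 1,
        (c₁ * 2 ^ (-|a|) * Real.exp (-b) * m) * (Real.exp (-b * ν) * ν ^ a) ≤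
          u (x - ξ) * u' x := by
      intro x hx
      have hx1 : ‖x‖ < 1 := by simpa [Metric.mem_ball, dist_eq_norm] using hx
      have hr1 : ν - 1 ≤ ‖x - ξ‖ := by
        have h := norm_sub_norm_le ξ x
        rw [norm_sub_rev ξ x] at h
        linarith
      have hr2 : ‖x - ξ‖ ≤ ν + 1 := by
        have h := norm_sub_le x ξ
        linarith
      have hxξ1 : 1 ≤ ‖x - ξ‖ := by linarith
      have hu1 := (hub _ hxξ1).1
      have hu2 : m ≤ u' x := hmin (Metric.ball_subset_closedBall hx)
      calc (c₁ * 2 ^ (-|a|) * Real.exp (-b) * m) * (Real.exp (-b * ν) * ν ^ a)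
          ≤ c₁ * ‖x - ξ‖ ^ a * Real.exp (-b * ‖x - ξ‖) * m :=
            scalarL a b c₁ m ν ‖x - ξ‖ hb hc₁ hmpos hν2 hr1 hr2
        _ ≤ u (x - ξ) * u' x := mul_le_mul hu1 hu2 hmpos.le (hupos _).le
    calc C₁ * Real.exp (-b * ν) * ν ^ a
        = vol * ((c₁ * 2 ^ (-|a|) * Real.exp (-b) * m) * (Real.exp (-b * ν) * ν ^ a)) := by
          rw [hC₁]; ring
      _ = ∫ _ in Metric.ball (0 : EuclideanSpace ℝ (Fin n)) 1,
            (c₁ * 2 ^ (-|a|) * Real.exp (-b) * m) * (Real.exp (-b * ν) * ν ^ a) := by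
          rw [setIntegral_const, smul_eq_mul]; rfl
      _ ≤ ∫ x in Metric.ball (0 : EuclideanSpace ℝ (Fin n)) 1, u (x - ξ) * u' x :=
          setIntegral_mono_on hconst hf.integrableOn measurableSet_ball hle
      _ ≤ ∫ x, u (x - ξ) * u' x :=
          setIntegral_le_integral hf (ae_of_all _ fun x => (hfpos x).le)
  · -- upper bound
    set A := Metric.closedBall (0 : EuclideanSpace ℝ (Fin n)) (ν / 2) with hA
    have hAmeas : MeasurableSet A := measurableSet_closedBall
    set CA := c₂ * 2 ^ |a| * ν ^ a * Real.exp (-b * ν) * D' with hCA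
    set CB := D * D' * K₃ * ν ^ a * Real.exp (-b * ν) with hCB
    have hCA0 : 0 ≤ CA := by
      have h2 : (0:ℝ) < 2 ^ |a| := Real.rpow_pos_of_pos two_pos _
      rw [hCA]; positivity
    have hCB0 : 0 ≤ CB := by rw [hCB]; positivity
    have hgA : Integrable (fun x : EuclideanSpace ℝ (Fin n) =>
        CA * ((1 + ‖x‖) ^ α' * Real.exp (-(b' - b) * ‖x‖))) := hI₁int.const_mul CA
    have hgB : Integrable (fun x : EuclideanSpace ℝ (Fin n) =>
        CB * ((1 + ‖x‖) ^ (α + α') * Real.exp (-ε * ‖x‖))) := hI₂int.const_mul CB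
    have hA_le : (∫ x in A, u (x - ξ) * u' x) ≤ CA * I₁ := by
      have hptA : ∀ x ∈ A, u (x - ξ) * u' x ≤
          CA * ((1 + ‖x‖) ^ α' * Real.exp (-(b' - b) * ‖x‖)) := by
        intro x hx
        have hx1 : ‖x‖ ≤ ν / 2 := by simpa [hA, Metric.mem_closedBall, dist_eq_norm] using hx
        have hr0 : ν - ‖x‖ ≤ ‖x - ξ‖ := by
          have h := norm_sub_norm_le ξ x
          rw [norm_sub_rev ξ x] at h
          linarith
        have hr1 : ν / 2 ≤ ‖x - ξ‖ := by linarith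
        have hr2 : ‖x - ξ‖ ≤ 2 * ν := by
          have h := norm_sub_le x ξ
          linarith
        have hxξ1 : 1 ≤ ‖x - ξ‖ := by linarith
        calc u (x - ξ) * u' x
            ≤ (c₂ * ‖x - ξ‖ ^ a * Real.exp (-b * ‖x - ξ‖)) *
              (D' * (1 + ‖x‖) ^ α' * Real.exp (-b' * ‖x‖)) :=
              mul_le_mul (hub _ hxξ1).2 (hD'b x) (hu'pos x).le (by positivity)
          _ ≤ CA * ((1 + ‖x‖) ^ α' * Real.exp (-(b' - b) * ‖x‖)) := by
              rw [hCA]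
              exact scalarA a b b' c₂ D' α' ν ‖x - ξ‖ ‖x‖ hb hc₂ hD' hν2 (norm_nonneg x)
                hα'0 hr0 hr1 hr2
      calc (∫ x in A, u (x - ξ) * u' x)
          ≤ ∫ x in A, CA * ((1 + ‖x‖) ^ α' * Real.exp (-(b' - b) * ‖x‖)) :=
            setIntegral_mono_on hf.integrableOn hgA.integrableOn hAmeas hptA
        _ ≤ ∫ x, CA * ((1 + ‖x‖) ^ α' * Real.exp (-(b' - b) * ‖x‖)) :=
            setIntegral_le_integral hgA (ae_of_all _ fun x => by positivity)
        _ = CA * I₁ := by rw [integral_const_mul]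
    have hB_le : (∫ x in Aᶜ, u (x - ξ) * u' x) ≤ CB * I₂ := by
      have hptB : ∀ x ∈ Aᶜ, u (x - ξ) * u' x ≤
          CB * ((1 + ‖x‖) ^ (α + α') * Real.exp (-ε * ‖x‖)) := by
        intro x hx
        have hx1 : ν / 2 ≤ ‖x‖ := by
          have : ¬ (‖x‖ ≤ ν / 2) := by
            simpa [hA, Metric.mem_closedBall, dist_eq_norm] using hx
          linarith
        have hνrt : ν ≤ ‖x - ξ‖ + ‖x‖ := by
          have h : ξ = x - (x - ξ) := by abel
          calc ν = ‖x - (x - ξ)‖ := by rw [hν, ← h]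
            _ ≤ ‖x‖ + ‖x - ξ‖ := norm_sub_le x (x - ξ)
            _ = ‖x - ξ‖ + ‖x‖ := by ring
        have hrtν : ‖x - ξ‖ ≤ ν + ‖x‖ := by
          have h := norm_sub_le x ξ
          linarith
        have hu'2 : u' x ≤ D' * (1 + ‖x‖) ^ α' * Real.exp (-(b + 2 * ε) * ‖x‖) := by
          rw [← hb'eq]; exact hD'b x
        calc u (x - ξ) * u' x
            ≤ (D * (1 + ‖x - ξ‖) ^ α * Real.exp (-b * ‖x - ξ‖)) *
              (D' * (1 + ‖x‖) ^ α' * Real.exp (-(b + 2 * ε) * ‖x‖)) :=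
              mul_le_mul (hDb _) hu'2 (hu'pos x).le (by positivity)
          _ ≤ CB * ((1 + ‖x‖) ^ (α + α') * Real.exp (-ε * ‖x‖)) := by
              rw [hCB]
              exact scalarB a b ε D D' α α' K₃ ν ‖x - ξ‖ ‖x‖ hb hε hD hD' hν2
                (norm_nonneg _) (norm_nonneg _) hα0 hα'0 hνrt hrtν hx1 hK₃b
      calc (∫ x in Aᶜ, u (x - ξ) * u' x)
          ≤ ∫ x in Aᶜ, CB * ((1 + ‖x‖) ^ (α + α') * Real.exp (-ε * ‖x‖)) :=
            setIntegral_mono_on hf.integrableOn hgB.integrableOn hAmeas.compl hptB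
        _ ≤ ∫ x, CB * ((1 + ‖x‖) ^ (α + α') * Real.exp (-ε * ‖x‖)) :=
            setIntegral_le_integral hgB (ae_of_all _ fun x => by positivity)
        _ = CB * I₂ := by rw [integral_const_mul]
    calc (∫ x, u (x - ξ) * u' x)
        = (∫ x in A, u (x - ξ) * u' x) + ∫ x in Aᶜ, u (x - ξ) * u' x :=
          (integral_add_compl hAmeas hf).symm
      _ ≤ CA * I₁ + CB * I₂ := add_le_add hA_le hB_le
      _ = C₂ * Real.exp (-b * ν) * ν ^ a := by rw [hCA, hCB, hC₂]; ring
      _ ≤ max C₁ C₂ * Real.exp (-b * ν) * ν ^ a := by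
          apply mul_le_mul_of_nonneg_right _ hνa.le
          exact mul_le_mul_of_nonneg_right (le_max_right _ _) (Real.exp_pos _).le

end
end

section
/- There exists C > 0 such that for all ε > 0 and all y_i, y_j ∈ ℝ³ with y_i ≠ y_j: ∫_{ℝ³} |∇w_{ε,y_i}(x) · ∇w_{ε,y_j}(x)| dx ≤ C ε e^{−η|y_i−y_j|/ε}, where w_{ε,y}(x) = w((x−y)/ε). -/
open MeasureTheory Real Filter

noncomputable section

section AuxStmt7
open Set

namespace Stmt7

lemma integrable_exp_neg_abs {c : ℝ} (hc : 0 < c) :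
    Integrable (fun t : ℝ => Real.exp (-(c * |t|))) := by
  have h1 : IntegrableOn (fun t : ℝ => Real.exp (-(c * |t|))) (Ioi 0) := by
    refine (exp_neg_integrableOn_Ioi 0 hc).congr_fun (fun t ht => ?_) measurableSet_Ioi
    rw [abs_of_pos ht]; ring_nf
  have h2 : IntegrableOn (fun t : ℝ => Real.exp (-(c * |t|))) (Iio 0) := by
    rw [← (Measure.measurePreserving_neg (volume : Measure ℝ)).integrableOn_comp_preimage
        (Homeomorph.neg ℝ).measurableEmbedding]
    simpa only [Function.comp_def, abs_neg, neg_preimage, neg_Iio, neg_zero] using h1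
  rw [← integrableOn_univ, ← Set.Iio_union_Ici (a := (0:ℝ)), integrableOn_union]
  exact ⟨h2, (integrableOn_Ici_iff_integrableOn_Ioi).mpr h1⟩

lemma integral_exp_neg_abs {c : ℝ} (hc : 0 < c) :
    ∫ t : ℝ, Real.exp (-(c * |t|)) = 2 / c := by
  have h := integral_comp_abs (f := fun x : ℝ => Real.exp (-(c * x)))
  rw [h]
  have h2 : ∫ x : ℝ in Ioi 0, Real.exp (-(c * x)) = c⁻¹ * 1 := by
    have := integral_comp_mul_left_Ioi (fun u : ℝ => Real.exp (-u)) 0 hc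
    simp only [mul_zero, smul_eq_mul, integral_exp_neg_Ioi_zero] at this
    simpa using this
  rw [h2]; field_simp

lemma lintegral_exp_neg_abs {c : ℝ} (hc : 0 < c) :
    ∫⁻ t : ℝ, ENNReal.ofReal (Real.exp (-(c * |t|))) = ENNReal.ofReal (2 / c) := by
  rw [← ofReal_integral_eq_lintegral_ofReal (integrable_exp_neg_abs hc)
      (Eventually.of_forall fun t => (exp_pos _).le), integral_exp_neg_abs hc]

lemma lintegral_gauss {b : ℝ} (hb : 0 < b) :
    ∫⁻ t : ℝ, ENNReal.ofReal (Real.exp (-(b * t ^ 2))) = ENNReal.ofReal (Real.sqrt (π / b)) := by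
  have : ∀ t : ℝ, Real.exp (-(b * t ^ 2)) = Real.exp (-b * t ^ 2) := by intro t; ring_nf
  simp_rw [this]
  rw [← ofReal_integral_eq_lintegral_ofReal (integrable_exp_neg_mul_sq hb)
      (Eventually.of_forall fun t => (exp_pos _).le), integral_gaussian]

end Stmt7

namespace Stmt7x
open Stmt7 ENNReal

lemma lintegral_shift (c : ℝ) (f : ℝ → ENNReal) (hf : Measurable f) :
    ∫⁻ t : ℝ, f (t - c) = ∫⁻ t : ℝ, f t := by
  simpa [sub_eq_add_neg] using
    (measurePreserving_add_right (volume : Measure ℝ) (-c)).lintegral_comp hf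

lemma lintegral_t {η D : ℝ} (hη : 0 < η) (hD : 0 ≤ D) :
    ∫⁻ t : ℝ, ENNReal.ofReal (Real.exp (-(η * (|t| + |t - D|))))
      ≤ ENNReal.ofReal ((D + 2 / η) * Real.exp (-(η * D))) := by
  have hmeas : Measurable fun t : ℝ => ENNReal.ofReal (Real.exp (-(2 * η * |t|))) :=
    (measurable_id.abs.const_mul (2*η)).neg.exp.ennreal_ofReal
  have step : ∀ t : ℝ, ENNReal.ofReal (Real.exp (-(η * (|t| + |t - D|)))) ≤
      (Set.Icc (0:ℝ) D).indicator (fun _ => ENNReal.ofReal (Real.exp (-(η * D)))) t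
      + (ENNReal.ofReal (Real.exp (-(η * D))) * ENNReal.ofReal (Real.exp (-(2 * η * |t|)))
      + ENNReal.ofReal (Real.exp (-(η * D))) * ENNReal.ofReal (Real.exp (-(2 * η * |t - D|)))) := by
    intro t
    rcases le_or_gt t 0 with ht | ht
    · have h1 : |t| = -t := abs_of_nonpos ht
      have h2 : |t - D| = -(t - D) := abs_of_nonpos (by linarith)
      have : Real.exp (-(η * (|t| + |t - D|)))
          = Real.exp (-(η * D)) * Real.exp (-(2 * η * |t|)) := by
        rw [← Real.exp_add, h1, h2]; ring_nf
      rw [this, ENNReal.ofReal_mul (Real.exp_pos _).le]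
      exact le_add_left (le_add_right le_rfl)
    rcases le_or_gt t D with htD | htD
    · have h1 : |t| = t := abs_of_pos ht
      have h2 : |t - D| = -(t - D) := abs_of_nonpos (by linarith)
      have : Real.exp (-(η * (|t| + |t - D|))) = Real.exp (-(η * D)) := by
        rw [h1, h2]; ring_nf
      rw [this, Set.indicator_of_mem (Set.mem_Icc.mpr ⟨ht.le, htD⟩)]
      exact le_add_right le_rfl
    · have h1 : |t| = t := abs_of_pos ht
      have h2 : |t - D| = t - D := abs_of_pos (by linarith)
      have : Real.exp (-(η * (|t| + |t - D|)))
          = Real.exp (-(η * D)) * Real.exp (-(2 * η * |t - D|)) := by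
        rw [← Real.exp_add, h1, h2]; ring_nf
      rw [this, ENNReal.ofReal_mul (Real.exp_pos _).le]
      exact le_add_left (le_add_left le_rfl)
  refine le_trans (lintegral_mono step) ?_
  rw [lintegral_add_left (measurable_const.indicator measurableSet_Icc),
    lintegral_add_left (hmeas.const_mul _),
    lintegral_indicator measurableSet_Icc, setLIntegral_const,
    lintegral_const_mul' _ _ ENNReal.ofReal_ne_top,
    lintegral_const_mul' _ _ ENNReal.ofReal_ne_top]
  have h2η : (0:ℝ) < 2 * η := by linarith
  have hshift : ∫⁻ t : ℝ, ENNReal.ofReal (Real.exp (-(2 * η * |t - D|)))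
      = ENNReal.ofReal (2 / (2*η)) := by
    rw [lintegral_shift D _ hmeas, lintegral_exp_neg_abs h2η]
  rw [hshift, lintegral_exp_neg_abs h2η, Real.volume_Icc]
  have e1 : ENNReal.ofReal (Real.exp (-(η * D))) * ENNReal.ofReal (D - 0)
      = ENNReal.ofReal (Real.exp (-(η * D)) * (D - 0)) :=
    (ENNReal.ofReal_mul (Real.exp_pos _).le).symm
  have e2 : ENNReal.ofReal (Real.exp (-(η * D))) * ENNReal.ofReal (2 / (2*η))
      = ENNReal.ofReal (Real.exp (-(η * D)) * (2 / (2*η))) :=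
    (ENNReal.ofReal_mul (Real.exp_pos _).le).symm
  have hexp : (0:ℝ) ≤ Real.exp (-(η * D)) := (Real.exp_pos _).le
  have hinv : (0:ℝ) ≤ 2 / (2*η) := by positivity
  have hD0 : (0:ℝ) ≤ D - 0 := by linarith
  rw [e1, e2,
    ← ENNReal.ofReal_add (mul_nonneg hexp hinv) (mul_nonneg hexp hinv),
    ← ENNReal.ofReal_add (mul_nonneg hexp hD0)
      (add_nonneg (mul_nonneg hexp hinv) (mul_nonneg hexp hinv))]
  apply ENNReal.ofReal_le_ofReal
  have h2 : 2 / (2*η) = 1/η := by field_simp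
  rw [h2]
  apply le_of_eq; ring

end Stmt7x

namespace Stmt7y
open Stmt7 Stmt7x

lemma lintegral_v {η m : ℝ} (hη : 0 < η) (hm : 0 ≤ m) :
    ∫⁻ v : ℝ × ℝ, ENNReal.ofReal
        (Real.exp (-(η * (|v.1| + |v.2|) / 8)) +
         Real.exp (-(η * (v.1 ^ 2 + v.2 ^ 2) / (4 * (m + 1)))))
      ≤ ENNReal.ofReal ((256 / η ^ 2 + 4 * π / η) * (1 + m)) := by
  have hb : (0:ℝ) < η / (4 * (m+1)) := by positivity
  have hc : (0:ℝ) < η / 8 := by positivity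
  have key : ∀ v : ℝ × ℝ,
      ENNReal.ofReal (Real.exp (-(η * (|v.1| + |v.2|) / 8)) +
        Real.exp (-(η * (v.1 ^ 2 + v.2 ^ 2) / (4 * (m + 1)))))
      = ENNReal.ofReal (Real.exp (-(η/8 * |v.1|))) * ENNReal.ofReal (Real.exp (-(η/8 * |v.2|)))
      + ENNReal.ofReal (Real.exp (-(η/(4*(m+1)) * v.1 ^ 2)))
        * ENNReal.ofReal (Real.exp (-(η/(4*(m+1)) * v.2 ^ 2))) := by
    intro v
    rw [ENNReal.ofReal_add (Real.exp_pos _).le (Real.exp_pos _).le,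
      ← ENNReal.ofReal_mul (Real.exp_pos _).le, ← ENNReal.ofReal_mul (Real.exp_pos _).le,
      ← Real.exp_add, ← Real.exp_add]
    congr 2 <;> field_simp <;> ring
  simp_rw [key]
  have hf1 : Measurable fun x : ℝ => ENNReal.ofReal (Real.exp (-(η/8 * |x|))) :=
    (measurable_id.abs.const_mul (η/8)).neg.exp.ennreal_ofReal
  have hf2 : Measurable fun x : ℝ => ENNReal.ofReal (Real.exp (-(η/(4*(m+1)) * x ^ 2))) :=
    ((measurable_id.pow_const 2).const_mul (η/(4*(m+1)))).neg.exp.ennreal_ofReal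
  have e1 : (∫⁻ v : ℝ × ℝ, ENNReal.ofReal (Real.exp (-(η/8 * |v.1|)))
        * ENNReal.ofReal (Real.exp (-(η/8 * |v.2|))))
      = (∫⁻ x : ℝ, ENNReal.ofReal (Real.exp (-(η/8 * |x|))))
        * ∫⁻ x : ℝ, ENNReal.ofReal (Real.exp (-(η/8 * |x|))) := by
    rw [Measure.volume_eq_prod]; exact lintegral_prod_mul hf1.aemeasurable hf1.aemeasurable
  have e2 : (∫⁻ v : ℝ × ℝ, ENNReal.ofReal (Real.exp (-(η/(4*(m+1)) * v.1 ^ 2)))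
        * ENNReal.ofReal (Real.exp (-(η/(4*(m+1)) * v.2 ^ 2))))
      = (∫⁻ x : ℝ, ENNReal.ofReal (Real.exp (-(η/(4*(m+1)) * x ^ 2))))
        * ∫⁻ x : ℝ, ENNReal.ofReal (Real.exp (-(η/(4*(m+1)) * x ^ 2))) := by
    rw [Measure.volume_eq_prod]; exact lintegral_prod_mul hf2.aemeasurable hf2.aemeasurable
  rw [lintegral_add_left]
  · rw [e1, e2]
    rw [lintegral_exp_neg_abs hc, lintegral_gauss hb, ← ENNReal.ofReal_mul (by positivity),
      ← ENNReal.ofReal_mul (by positivity), Real.mul_self_sqrt (by positivity),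
      ← ENNReal.ofReal_add (by positivity) (by positivity)]
    apply ENNReal.ofReal_le_ofReal
    have h1 : 2 / (η/8) * (2 / (η/8)) = 256 / η^2 := by field_simp; ring
    have h2 : π / (η / (4*(m+1))) = 4*π/η * (1+m) := by field_simp; ring
    rw [h1, h2]
    have : (0:ℝ) ≤ 256 / η^2 := by positivity
    nlinarith [this, mul_nonneg this hm]
  · exact ((measurable_fst.abs.const_mul (η/8)).neg.exp.ennreal_ofReal).mul
      ((measurable_snd.abs.const_mul (η/8)).neg.exp.ennreal_ofReal)

end Stmt7y




namespace Stmt7c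

def Ψ (p : ℝ × ℝ × ℝ) : E3 :=
  (MeasurableEquiv.toLp 2 (Fin 3 → ℝ))
    ((MeasurableEquiv.piFinSuccAbove (fun _ : Fin 3 => ℝ) 0).symm
      (p.1, MeasurableEquiv.finTwoArrow.symm p.2))

lemma Ψ_measurePreserving : MeasurePreserving Ψ (volume : Measure (ℝ × ℝ × ℝ)) (volume : Measure E3) := by
  have h0 := (EuclideanSpace.volume_preserving_symm_measurableEquiv_toLp (Fin 3)).symm
  have h1 := (measurePreserving_piFinSuccAbove (fun _ : Fin 3 => (volume : Measure ℝ)) 0).symm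
  have h2 := (volume_preserving_finTwoArrow ℝ).symm
  have h3 : MeasurePreserving (Prod.map (id : ℝ → ℝ) (MeasurableEquiv.finTwoArrow.symm : ℝ × ℝ → (Fin 2 → ℝ)))
      (volume : Measure (ℝ × ℝ × ℝ)) ((volume : Measure ℝ).prod (volume : Measure (Fin 2 → ℝ))) := by
    have := (MeasurePreserving.id (volume : Measure ℝ)).prod h2
    simpa [Measure.volume_eq_prod] using this
  have hcomp := (h0.comp (h1.comp h3))
  have : Ψ = ((MeasurableEquiv.toLp 2 (Fin 3 → ℝ)) ∘
      (MeasurableEquiv.piFinSuccAbove (fun _ : Fin 3 => ℝ) 0).symm ∘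
      (Prod.map id (MeasurableEquiv.finTwoArrow.symm))) := by
    funext p; rfl
  rw [this]
  exact hcomp

lemma Ψ_coord (p : ℝ × ℝ × ℝ) :
    (Ψ p : EuclideanSpace ℝ (Fin 3)) 0 = p.1 ∧ (Ψ p) 1 = p.2.1 ∧ (Ψ p) 2 = p.2.2 := by
  refine ⟨rfl, rfl, rfl⟩

lemma Ψ_norm (p : ℝ × ℝ × ℝ) :
    ‖Ψ p‖ = Real.sqrt (p.1^2 + (p.2.1^2 + p.2.2^2)) := by
  rw [EuclideanSpace.norm_eq]
  rw [Fin.sum_univ_three]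
  norm_num [Ψ_coord]
  ring_nf

end Stmt7c

namespace Stmt7c

lemma Ψ_sub_coord (p q : ℝ × ℝ × ℝ) :
    (Ψ p - Ψ q) 0 = p.1 - q.1 ∧ (Ψ p - Ψ q) 1 = p.2.1 - q.2.1 ∧
      (Ψ p - Ψ q) 2 = p.2.2 - q.2.2 := ⟨rfl, rfl, rfl⟩

lemma Ψ_norm_sub (p q : ℝ × ℝ × ℝ) :
    ‖Ψ p - Ψ q‖ = Real.sqrt ((p.1 - q.1)^2 + ((p.2.1 - q.2.1)^2 + (p.2.2 - q.2.2)^2)) := by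
  rw [EuclideanSpace.norm_eq, Fin.sum_univ_three]
  have h := Ψ_sub_coord p q
  rw [h.1, h.2.1, h.2.2]
  norm_num; ring_nf

end Stmt7c



namespace Stmt7p

/-- the radial profile -/
def F (η a : ℝ) : ℝ := Real.exp (-(η * a)) / (1 + a)

lemma sqrt_lb {x s : ℝ} (hx : 0 ≤ x) (hs : 0 ≤ s) :
    x + s / (2 * (x + Real.sqrt s)) ≤ Real.sqrt (x^2 + s) := by
  have hrn : 0 ≤ Real.sqrt s := Real.sqrt_nonneg s
  have hr : Real.sqrt s ^ 2 = s := Real.sq_sqrt hs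
  rcases eq_or_lt_of_le (add_nonneg hx hrn) with h0 | h0
  · have hx0 : x = 0 := by nlinarith
    have hs0 : s = 0 := by nlinarith
    simp [hx0, hs0]
  · set r := Real.sqrt s with hrdef
    set q := s / (2 * (x + r)) with hqdef
    have hA : (0:ℝ) < 2 * (x + r) := by linarith
    have hqn : 0 ≤ q := div_nonneg hs hA.le
    have hq : q * (2 * (x + r)) = s := div_mul_cancel₀ _ (ne_of_gt hA)
    have hq2r : q ≤ 2 * r := by
      rcases eq_or_lt_of_le hs with hs0 | hs0
      · have : q = 0 := by rw [hqdef, ← hs0, zero_div]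
        rw [this]; linarith
      · have hrp : 0 < r := Real.sqrt_pos.mpr hs0
        have h1 : q * (2 * r) ≤ s := by nlinarith [mul_nonneg hqn hx]
        nlinarith
    have key : (x + q)^2 ≤ x^2 + s := by nlinarith [mul_nonneg hqn hx]
    have hnn : 0 ≤ x + q := by positivity
    calc x + q = Real.sqrt ((x + q)^2) := (Real.sqrt_sq hnn).symm
      _ ≤ Real.sqrt (x^2 + s) := Real.sqrt_le_sqrt key

lemma Q_bound {η m s : ℝ} (hη : 0 < η) (hm : 0 ≤ m) (hs : 0 ≤ s) :
    Real.exp (-(η * (s / (2 * (m + Real.sqrt s))))) ≤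
      Real.exp (-(η * (Real.sqrt s) / 4)) + Real.exp (-(η * s / (4 * (m + 1)))) := by
  have hrn : 0 ≤ Real.sqrt s := Real.sqrt_nonneg s
  have hr : Real.sqrt s ^ 2 = s := Real.sq_sqrt hs
  rcases eq_or_lt_of_le hs with hs0 | hs0
  · rw [← hs0]
    norm_num
  · have hrp : 0 < Real.sqrt s := Real.sqrt_pos.mpr hs0
    set r := Real.sqrt s with hrdef
    rcases le_total r m with h | h
    · have hden : s / (4 * (m + 1)) ≤ s / (2 * (m + r)) :=
        div_le_div_of_nonneg_left hs (by linarith) (by linarith)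
      have e : η * s / (4 * (m + 1)) = η * (s / (4 * (m + 1))) := by ring
      have h2 : Real.exp (-(η * (s / (2 * (m + r))))) ≤ Real.exp (-(η * s / (4 * (m + 1)))) := by
        apply Real.exp_le_exp.mpr
        rw [e]
        have := mul_le_mul_of_nonneg_left hden hη.le
        linarith
      linarith [Real.exp_pos (-(η * r / 4))]
    · have hden : r / 4 ≤ s / (2 * (m + r)) := by
        rw [div_le_div_iff₀ (by norm_num) (by linarith)]
        nlinarith
      have e : η * r / 4 = η * (r / 4) := by ring
      have h2 : Real.exp (-(η * (s / (2 * (m + r))))) ≤ Real.exp (-(η * r / 4)) := by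
        apply Real.exp_le_exp.mpr
        rw [e]
        have := mul_le_mul_of_nonneg_left hden hη.le
        linarith
      linarith [Real.exp_pos (-(η * s / (4 * (m + 1))))]

end Stmt7p

namespace Stmt7p

lemma le_sqrt_weight {t s : ℝ} (hs : 0 ≤ s) : |t| ≤ Real.sqrt (t^2 + s) := by
  rw [← Real.sqrt_sq_eq_abs]
  exact Real.sqrt_le_sqrt (by linarith)

lemma pointwise {η D t v0 v1 : ℝ} (hη : 0 < η) (hD : 0 ≤ D) :
    F η (Real.sqrt (t^2 + (v0^2 + v1^2))) * F η (Real.sqrt ((t - D)^2 + (v0^2 + v1^2))) ≤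
      Real.exp (-(η * (|t| + |t - D|))) / ((1 + |t|) * (1 + |t - D|)) *
        (Real.exp (-(η * (|v0| + |v1|) / 8)) +
         Real.exp (-(η * (v0^2 + v1^2) / (4 * (min |t| |t - D| + 1))))) := by
  set s := v0^2 + v1^2 with hsdef
  have hs : 0 ≤ s := by positivity
  set r := Real.sqrt s with hrdef
  set a := Real.sqrt (t^2 + s) with hadef
  set b := Real.sqrt ((t-D)^2 + s) with hbdef
  set m := min |t| |t - D| with hmdef
  have hm : 0 ≤ m := le_min (abs_nonneg t) (abs_nonneg _)
  have hta : |t| ≤ a := le_sqrt_weight hs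
  have htb : |t - D| ≤ b := le_sqrt_weight hs
  have ha0 : 0 ≤ a := Real.sqrt_nonneg _
  have hb0 : 0 ≤ b := Real.sqrt_nonneg _
  have hab : |t| + |t - D| + s / (2 * (m + r)) ≤ a + b := by
    rcases le_total |t| |t - D| with h | h
    · have hm' : m = |t| := min_eq_left h
      have h1 : |t| + s / (2 * (|t| + r)) ≤ a := by
        have h2 := sqrt_lb (abs_nonneg t) hs
        rwa [sq_abs t] at h2
      rw [hm']; linarith
    · have hm' : m = |t - D| := min_eq_right h
      have h1 : |t - D| + s / (2 * (|t - D| + r)) ≤ b := by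
        have h2 := sqrt_lb (abs_nonneg (t - D)) hs
        rwa [sq_abs (t - D)] at h2
      rw [hm']; linarith
  have hexp : Real.exp (-(η * (a + b))) ≤
      Real.exp (-(η * (|t| + |t - D|))) * Real.exp (-(η * (s / (2 * (m + r))))) := by
    rw [← Real.exp_add]
    apply Real.exp_le_exp.mpr
    have h3 := mul_le_mul_of_nonneg_left hab hη.le
    have e : η * (|t| + |t - D| + s / (2 * (m + r)))
        = η * (|t| + |t - D|) + η * (s / (2 * (m + r))) := by ring
    rw [e] at h3; linarith
  have hQ : Real.exp (-(η * (s / (2 * (m + r))))) ≤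
      Real.exp (-(η * (|v0| + |v1|) / 8)) + Real.exp (-(η * s / (4 * (m + 1)))) := by
    refine le_trans (Q_bound hη hm hs) ?_
    have hr2 : (|v0| + |v1|) / 2 ≤ r := by
      have h1 : ((|v0| + |v1|) / 2)^2 ≤ s := by
        have h4 := sq_nonneg (|v0| - |v1|)
        have e0 := sq_abs v0; have e1 := sq_abs v1
        nlinarith
      calc (|v0|+|v1|)/2 = Real.sqrt (((|v0|+|v1|)/2)^2) := (Real.sqrt_sq (by positivity)).symm
        _ ≤ r := Real.sqrt_le_sqrt h1
    have h5 : Real.exp (-(η * r / 4)) ≤ Real.exp (-(η * (|v0| + |v1|) / 8)) := by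
      apply Real.exp_le_exp.mpr
      have h6 := mul_le_mul_of_nonneg_left hr2 hη.le
      nlinarith
    linarith
  have hweight : (1 + |t|) * (1 + |t - D|) ≤ (1 + a) * (1 + b) :=
    mul_le_mul (by linarith) (by linarith) (by positivity) (by linarith)
  have hwpos : (0:ℝ) < (1 + |t|) * (1 + |t - D|) := by positivity
  have hFF : F η a * F η b = Real.exp (-(η * (a + b))) / ((1 + a) * (1 + b)) := by
    unfold F
    rw [div_mul_div_comm, ← Real.exp_add]
    congr 2
    ring
  rw [hFF]
  have h2 : Real.exp (-(η * (a + b))) ≤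
      Real.exp (-(η * (|t| + |t - D|))) *
        (Real.exp (-(η * (|v0| + |v1|) / 8)) + Real.exp (-(η * s / (4 * (m + 1))))) :=
    le_trans hexp (mul_le_mul_of_nonneg_left hQ (Real.exp_pos _).le)
  calc Real.exp (-(η * (a + b))) / ((1+a)*(1+b))
      ≤ Real.exp (-(η * (a + b))) / ((1+|t|)*(1+|t-D|)) :=
        div_le_div_of_nonneg_left (Real.exp_pos _).le hwpos hweight
    _ ≤ (Real.exp (-(η * (|t| + |t-D|))) *
          (Real.exp (-(η * (|v0| + |v1|) / 8)) + Real.exp (-(η * s / (4 * (m + 1)))))) /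
          ((1+|t|)*(1+|t-D|)) := by
        apply (div_le_div_iff_of_pos_right hwpos).mpr h2
    _ = Real.exp (-(η * (|t| + |t-D|))) / ((1+|t|)*(1+|t-D|)) *
          (Real.exp (-(η * (|v0| + |v1|) / 8)) + Real.exp (-(η * s / (4 * (m + 1))))) := by
        ring

end Stmt7p

namespace Stmt7core
open Stmt7 Stmt7x Stmt7y Stmt7c Stmt7p

lemma weight_ineq {η D t K1 : ℝ} (hη : 0 < η) (hD : 0 ≤ D) (hK1 : 0 ≤ K1) :
    Real.exp (-(η * (|t| + |t - D|))) / ((1 + |t|) * (1 + |t - D|)) * (K1 * (1 + min |t| |t - D|))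
      ≤ K1 * (2 / (2 + D)) * Real.exp (-(η * (|t| + |t - D|))) := by
  have hwpos : (0:ℝ) < (1 + |t|) * (1 + |t - D|) := by positivity
  have h2D : (0:ℝ) < 2 + D := by linarith
  have habs : D ≤ |t| + |t - D| := by
    have h1 : |t - (t - D)| ≤ |t| + |t - D| := abs_sub t (t - D)
    simpa [abs_of_nonneg hD] using h1
  have key : (1 + min |t| |t - D|) * (2 + D) ≤ 2 * ((1 + |t|) * (1 + |t - D|)) := by
    rcases le_total |t| |t - D| with h | h
    · rw [min_eq_left h]
      nlinarith [abs_nonneg t, abs_nonneg (t - D)]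
    · rw [min_eq_right h]
      nlinarith [abs_nonneg t, abs_nonneg (t - D)]
  have mstep : (1 + min |t| |t - D|) / ((1 + |t|) * (1 + |t - D|)) ≤ 2 / (2 + D) := by
    rw [div_le_div_iff₀ hwpos h2D]
    linarith
  have e1 : Real.exp (-(η * (|t| + |t - D|))) / ((1 + |t|) * (1 + |t - D|)) *
      (K1 * (1 + min |t| |t - D|)) = Real.exp (-(η * (|t| + |t - D|))) * K1 *
      ((1 + min |t| |t - D|) / ((1 + |t|) * (1 + |t - D|))) := by ring
  rw [e1]
  calc Real.exp (-(η * (|t| + |t - D|))) * K1 *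
        ((1 + min |t| |t - D|) / ((1 + |t|) * (1 + |t - D|)))
      ≤ Real.exp (-(η * (|t| + |t - D|))) * K1 * (2 / (2 + D)) := by
        apply mul_le_mul_of_nonneg_left mstep (by positivity)
    _ = K1 * (2 / (2 + D)) * Real.exp (-(η * (|t| + |t - D|))) := by ring

lemma core {η : ℝ} (hη : 0 < η) (d : E3) :
    ∫⁻ z : E3, ENNReal.ofReal (F η ‖z‖ * F η ‖z - d‖)
      ≤ ENNReal.ofReal ((256/η^2 + 4*π/η) * (2 * (1 + 2/η)) * Real.exp (-(η * ‖d‖))) := by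
  set D := ‖d‖ with hDdef
  have hD : 0 ≤ D := norm_nonneg d
  set K1 : ℝ := 256/η^2 + 4*π/η with hK1def
  have hK1 : 0 ≤ K1 := by positivity
  -- continuity facts
  have hFc : ∀ c : E3, Continuous fun z : E3 => F η ‖z - c‖ := by
    intro c
    unfold F
    apply Continuous.div
    · exact Real.continuous_exp.comp
        ((continuous_const.mul (continuous_norm.comp (continuous_id.sub continuous_const))).neg)
    · exact continuous_const.add (continuous_norm.comp (continuous_id.sub continuous_const))
    · intro z; positivity
  have hmeasgen : ∀ c : E3, Measurable fun z : E3 => ENNReal.ofReal (F η ‖z‖ * F η ‖z - c‖) := by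
    intro c
    have h1 : Continuous fun z : E3 => F η ‖z - 0‖ * F η ‖z - c‖ := (hFc 0).mul (hFc c)
    simp only [sub_zero] at h1
    exact (ENNReal.continuous_ofReal.comp h1).measurable
  -- rotation
  set u : E3 := Ψ (D, 0, 0) with hudef
  have hu : ‖u‖ = ‖d‖ := by
    rw [hudef, Ψ_norm]
    simp only []
    norm_num
    exact Real.sqrt_sq hD
  set R := (Submodule.reflection (ℝ ∙ (u - d))ᗮ) with hRdef
  have hRu : R u = d := Submodule.reflection_sub hu
  have hstep1 : ∫⁻ z : E3, ENNReal.ofReal (F η ‖z‖ * F η ‖z - d‖)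
      = ∫⁻ z : E3, ENNReal.ofReal (F η ‖z‖ * F η ‖z - u‖) := by
    rw [← R.measurePreserving.lintegral_comp (hmeasgen d)]
    apply lintegral_congr
    intro z
    have h1 : ‖R z‖ = ‖z‖ := R.norm_map z
    have h2 : ‖R z - d‖ = ‖z - u‖ := by
      rw [← hRu, ← map_sub, R.norm_map]
    rw [h1, h2]
  have hstep2 : ∫⁻ z : E3, ENNReal.ofReal (F η ‖z‖ * F η ‖z - u‖)
      = ∫⁻ p : ℝ × ℝ × ℝ, ENNReal.ofReal
          (F η (Real.sqrt (p.1^2 + (p.2.1^2 + p.2.2^2))) *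
           F η (Real.sqrt ((p.1 - D)^2 + (p.2.1^2 + p.2.2^2)))) := by
    rw [← Ψ_measurePreserving.lintegral_comp (hmeasgen u)]
    apply lintegral_congr
    intro p
    rw [Ψ_norm, hudef, Ψ_norm_sub]
    norm_num
  rw [hstep1, hstep2]
  -- pointwise bound
  have hbound : ∀ p : ℝ × ℝ × ℝ,
      ENNReal.ofReal (F η (Real.sqrt (p.1^2 + (p.2.1^2 + p.2.2^2))) *
        F η (Real.sqrt ((p.1 - D)^2 + (p.2.1^2 + p.2.2^2))))
      ≤ ENNReal.ofReal
          (Real.exp (-(η * (|p.1| + |p.1 - D|))) / ((1 + |p.1|) * (1 + |p.1 - D|)))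
        * ENNReal.ofReal (Real.exp (-(η * (|p.2.1| + |p.2.2|) / 8)) +
            Real.exp (-(η * (p.2.1^2 + p.2.2^2) / (4 * (min |p.1| |p.1 - D| + 1))))) := by
    intro p
    refine le_trans (ENNReal.ofReal_le_ofReal (pointwise hη hD)) (le_of_eq ?_)
    exact ENNReal.ofReal_mul (by positivity)
  refine le_trans (lintegral_mono hbound) ?_
  -- Tonelli
  have hβc : Continuous fun t : ℝ =>
      ENNReal.ofReal (Real.exp (-(η * (|t| + |t - D|))) / ((1 + |t|) * (1 + |t - D|))) := by
    apply ENNReal.continuous_ofReal.comp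
    apply Continuous.div
    · exact Real.continuous_exp.comp
        ((continuous_const.mul (continuous_abs.add ((continuous_id.sub continuous_const).abs))).neg)
    · exact (continuous_const.add continuous_abs).mul
        (continuous_const.add (continuous_id.sub continuous_const).abs)
    · intro t; positivity
  have hγc : Continuous fun p : ℝ × ℝ × ℝ =>
      ENNReal.ofReal (Real.exp (-(η * (|p.2.1| + |p.2.2|) / 8)) +
        Real.exp (-(η * (p.2.1^2 + p.2.2^2) / (4 * (min |p.1| |p.1 - D| + 1))))) := by
    apply ENNReal.continuous_ofReal.comp
    apply Continuous.add
    · apply Real.continuous_exp.comp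
      apply Continuous.neg
      apply Continuous.div_const
      exact continuous_const.mul
        ((continuous_fst.comp continuous_snd).abs.add (continuous_snd.comp continuous_snd).abs)
    · apply Real.continuous_exp.comp
      apply Continuous.neg
      apply Continuous.div
      · exact continuous_const.mul (((continuous_fst.comp continuous_snd).pow 2).add
          ((continuous_snd.comp continuous_snd).pow 2))
      · exact continuous_const.mul ((continuous_fst.abs.min
          ((continuous_fst.sub continuous_const).abs)).add continuous_const)
      · intro p
        have : (0:ℝ) ≤ min |p.1| |p.1 - D| := le_min (abs_nonneg _) (abs_nonneg _)
        positivity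
  have hprodmeas : Measurable fun p : ℝ × ℝ × ℝ =>
      ENNReal.ofReal (Real.exp (-(η * (|p.1| + |p.1 - D|))) / ((1 + |p.1|) * (1 + |p.1 - D|)))
      * ENNReal.ofReal (Real.exp (-(η * (|p.2.1| + |p.2.2|) / 8)) +
          Real.exp (-(η * (p.2.1^2 + p.2.2^2) / (4 * (min |p.1| |p.1 - D| + 1))))) :=
    ((hβc.comp continuous_fst).measurable).mul hγc.measurable
  rw [Measure.volume_eq_prod, lintegral_prod _ hprodmeas.aemeasurable]
  calc (∫⁻ t : ℝ, ∫⁻ v : ℝ × ℝ,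
        ENNReal.ofReal (Real.exp (-(η * (|t| + |t - D|))) / ((1 + |t|) * (1 + |t - D|)))
        * ENNReal.ofReal (Real.exp (-(η * (|v.1| + |v.2|) / 8)) +
            Real.exp (-(η * (v.1^2 + v.2^2) / (4 * (min |t| |t - D| + 1))))))
      = ∫⁻ t : ℝ,
        ENNReal.ofReal (Real.exp (-(η * (|t| + |t - D|))) / ((1 + |t|) * (1 + |t - D|)))
        * ∫⁻ v : ℝ × ℝ, ENNReal.ofReal (Real.exp (-(η * (|v.1| + |v.2|) / 8)) +
            Real.exp (-(η * (v.1^2 + v.2^2) / (4 * (min |t| |t - D| + 1))))) := by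
        apply lintegral_congr
        intro t
        exact lintegral_const_mul' _ _ ENNReal.ofReal_ne_top
    _ ≤ ∫⁻ t : ℝ,
        ENNReal.ofReal (Real.exp (-(η * (|t| + |t - D|))) / ((1 + |t|) * (1 + |t - D|)))
        * ENNReal.ofReal (K1 * (1 + min |t| |t - D|)) := by
        apply lintegral_mono
        intro t
        apply mul_le_mul_right
        have h := lintegral_v (η := η) (m := min |t| |t - D|) hη
          (le_min (abs_nonneg _) (abs_nonneg _))
        exact h
    _ ≤ ∫⁻ t : ℝ, ENNReal.ofReal (K1 * (2 / (2 + D))) *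
          ENNReal.ofReal (Real.exp (-(η * (|t| + |t - D|)))) := by
        apply lintegral_mono
        intro t
        calc ENNReal.ofReal (Real.exp (-(η * (|t| + |t - D|))) / ((1 + |t|) * (1 + |t - D|)))
              * ENNReal.ofReal (K1 * (1 + min |t| |t - D|))
            = ENNReal.ofReal ((Real.exp (-(η * (|t| + |t - D|))) / ((1 + |t|) * (1 + |t - D|)))
                * (K1 * (1 + min |t| |t - D|))) :=
              (ENNReal.ofReal_mul (by positivity)).symm
          _ ≤ ENNReal.ofReal (K1 * (2 / (2 + D)) * Real.exp (-(η * (|t| + |t - D|)))) :=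
              ENNReal.ofReal_le_ofReal (weight_ineq hη hD hK1)
          _ = ENNReal.ofReal (K1 * (2 / (2 + D))) *
                ENNReal.ofReal (Real.exp (-(η * (|t| + |t - D|)))) :=
              ENNReal.ofReal_mul (by positivity)
    _ = ENNReal.ofReal (K1 * (2 / (2 + D))) *
          ∫⁻ t : ℝ, ENNReal.ofReal (Real.exp (-(η * (|t| + |t - D|)))) :=
        lintegral_const_mul' _ _ ENNReal.ofReal_ne_top
    _ ≤ ENNReal.ofReal (K1 * (2 / (2 + D))) *
          ENNReal.ofReal ((D + 2/η) * Real.exp (-(η * D))) :=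
        mul_le_mul_right (lintegral_t hη hD) _
    _ ≤ ENNReal.ofReal (K1 * (2 * (1 + 2/η)) * Real.exp (-(η * D))) := by
        rw [← ENNReal.ofReal_mul (by positivity)]
        apply ENNReal.ofReal_le_ofReal
        have h2D : (0:ℝ) < 2 + D := by linarith
        have hη2 : (0:ℝ) < 2/η := by positivity
        have hfrac : 2 / (2 + D) * (D + 2/η) ≤ 2 * (1 + 2/η) := by
          rw [div_mul_eq_mul_div, div_le_iff₀ h2D]
          nlinarith
        have hexp := (Real.exp_pos (-(η * D))).le
        calc K1 * (2 / (2 + D)) * ((D + 2/η) * Real.exp (-(η * D)))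
            = K1 * (2 / (2 + D) * (D + 2/η)) * Real.exp (-(η * D)) := by ring
          _ ≤ K1 * (2 * (1 + 2/η)) * Real.exp (-(η * D)) := by
              apply mul_le_mul_of_nonneg_right _ hexp
              exact mul_le_mul_of_nonneg_left hfrac hK1
end Stmt7core

namespace Stmt7main
open Stmt7 Stmt7x Stmt7y Stmt7c Stmt7p Stmt7core

lemma Fnormcont (η : ℝ) : Continuous fun v : E3 => F η ‖v‖ := by
  unfold F
  apply Continuous.div
  · exact Real.continuous_exp.comp ((continuous_const.mul continuous_norm).neg)
  · exact continuous_const.add continuous_norm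
  · intro z; positivity

lemma grad_norm {w : E3 → ℝ} (hwC1 : ContDiff ℝ 1 w) {ε : ℝ} (hε : ε ≠ 0) (y x : E3) :
    ‖gradient (fun z => w (ε⁻¹ • (z - y))) x‖ = |ε⁻¹| * ‖gradient w (ε⁻¹ • (x - y))‖ := by
  have hA : HasFDerivAt (fun z : E3 => ε⁻¹ • (z - y))
      (ε⁻¹ • ContinuousLinearMap.id ℝ E3) x := ((hasFDerivAt_id x).sub_const y).const_smul ε⁻¹
  have hW : HasFDerivAt w (fderiv ℝ w (ε⁻¹ • (x - y))) (ε⁻¹ • (x - y)) :=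
    (hwC1.differentiable one_ne_zero (ε⁻¹ • (x - y))).hasFDerivAt
  have hcomp : HasFDerivAt (fun z => w (ε⁻¹ • (z - y)))
      ((fderiv ℝ w (ε⁻¹ • (x - y))).comp (ε⁻¹ • ContinuousLinearMap.id ℝ E3)) x :=
    hW.comp x hA
  have hfd := hcomp.fderiv
  have hL : (fderiv ℝ w (ε⁻¹ • (x - y))).comp (ε⁻¹ • ContinuousLinearMap.id ℝ E3)
      = ε⁻¹ • (fderiv ℝ w (ε⁻¹ • (x - y))) := by
    ext v
    simp [ContinuousLinearMap.smul_apply, _root_.map_smul]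
  unfold gradient
  rw [hfd, hL, LinearIsometryEquiv.norm_map, LinearIsometryEquiv.norm_map, norm_smul,
    Real.norm_eq_abs]

lemma grad_cont {w : E3 → ℝ} (hwC1 : ContDiff ℝ 1 w) (ε : ℝ) (y : E3) :
    Continuous fun x : E3 => gradient (fun z => w (ε⁻¹ • (z - y))) x := by
  have hfC1 : ContDiff ℝ 1 fun z : E3 => w (ε⁻¹ • (z - y)) :=
    hwC1.comp ((contDiff_id.sub contDiff_const).const_smul ε⁻¹)
  have hcont : Continuous fun x : E3 => fderiv ℝ (fun z : E3 => w (ε⁻¹ • (z - y))) x :=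
    hfC1.continuous_fderiv one_ne_zero
  exact (LinearIsometryEquiv.continuous _).comp hcont

lemma lintegral_scale_shift {ε : ℝ} (hε : 0 < ε) (y : E3) (g : E3 → ENNReal)
    (hg : Measurable g) :
    ∫⁻ x : E3, g x = ENNReal.ofReal (ε^3) * ∫⁻ z : E3, g (y + ε • z) := by
  have hsmul : Measurable fun z : E3 => ε • z := measurable_const_smul ε
  have hsm : Measurable fun z : E3 => y + ε • z := hsmul.const_add y
  have h1 : ∫⁻ z : E3, g (y + ε • z)
      = ∫⁻ x, g x ∂(Measure.map (fun z : E3 => y + ε • z) volume) :=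
    (lintegral_map hg hsm).symm
  have hmap : (Measure.map (fun z : E3 => y + ε • z) volume)
      = ENNReal.ofReal ((ε^3)⁻¹) • volume := by
    have hcomp : (fun z : E3 => y + ε • z) = (fun a : E3 => y + a) ∘ (fun z : E3 => ε • z) :=
      rfl
    rw [hcomp, ← Measure.map_map (measurable_const_add y) hsmul]
    have h2 : Measure.map (fun z : E3 => ε • z) (volume : Measure E3)
        = ENNReal.ofReal ((ε^3)⁻¹) • volume := by
      have := Measure.map_addHaar_smul (μ := (volume : Measure E3)) (ne_of_gt hε)
      rw [this]
      congr 1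
      rw [finrank_euclideanSpace_fin]
      rw [abs_of_pos (by positivity)]
    rw [h2, Measure.map_smul, map_add_left_eq_self]
  rw [h1, hmap, lintegral_smul_measure, smul_eq_mul, ← mul_assoc, ← ENNReal.ofReal_mul (by positivity),
    mul_inv_cancel₀ (by positivity), ENNReal.ofReal_one, one_mul]

end Stmt7main


end AuxStmt7

open Set Stmt7 Stmt7x Stmt7y Stmt7c Stmt7p Stmt7core Stmt7main in
theorem statement7 (η C₀ : ℝ) (hη : 0 < η) (hC₀ : 0 < C₀)
    (w : E3 → ℝ) (hwC1 : ContDiff ℝ 1 w)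
    (hwrad : ∀ x y : E3, ‖x‖ = ‖y‖ → w x = w y)
    (hwdecay : ∀ x, ‖gradient w x‖ ≤ C₀ * (1 + ‖x‖)⁻¹ * Real.exp (-η * ‖x‖)) :
    ∃ C > 0, ∀ ε > (0 : ℝ), ∀ yi yj : E3, yi ≠ yj →
      (∫ x : E3, |(inner ℝ (gradient (fun z => w (ε⁻¹ • (z - yi))) x)
          (gradient (fun z => w (ε⁻¹ • (z - yj))) x) : ℝ)|)
        ≤ C * ε * Real.exp (-η * ‖yi - yj‖ / ε) := by
  have hπ := Real.pi_pos
  set K : ℝ := (256/η^2 + 4*π/η) * (2 * (1 + 2/η)) with hKdef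
  have hK : 0 < K := by positivity
  refine ⟨C₀^2 * K, by positivity, ?_⟩
  intro ε hε yi yj _hne
  have hεne : ε ≠ 0 := ne_of_gt hε
  have habs : |ε⁻¹| = ε⁻¹ := abs_of_pos (by positivity)
  have hF0 : ∀ v : E3, 0 ≤ F η ‖v‖ := fun v =>
    div_nonneg (Real.exp_pos _).le (by positivity)
  have hdecayF : ∀ v : E3, ‖gradient w v‖ ≤ C₀ * F η ‖v‖ := by
    intro v
    have h := hwdecay v
    have e : C₀ * (1 + ‖v‖)⁻¹ * Real.exp (-η * ‖v‖) = C₀ * F η ‖v‖ := by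
      unfold F
      rw [neg_mul]
      ring
    rwa [e] at h
  have hgi := grad_cont hwC1 ε yi
  have hgj := grad_cont hwC1 ε yj
  have hinnercont : Continuous fun x : E3 =>
      |(inner ℝ (gradient (fun z => w (ε⁻¹ • (z - yi))) x)
        (gradient (fun z => w (ε⁻¹ • (z - yj))) x) : ℝ)| := (hgi.inner hgj).abs
  rw [integral_eq_lintegral_of_nonneg_ae (Eventually.of_forall fun x => abs_nonneg _)
    hinnercont.aestronglyMeasurable]
  set c : ℝ := ε⁻¹ * ε⁻¹ * C₀^2 with hcdef
  have hc : 0 ≤ c := by positivity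
  have hpt : ∀ x : E3,
      |(inner ℝ (gradient (fun z => w (ε⁻¹ • (z - yi))) x)
        (gradient (fun z => w (ε⁻¹ • (z - yj))) x) : ℝ)|
      ≤ c * (F η ‖ε⁻¹ • (x - yi)‖ * F η ‖ε⁻¹ • (x - yj)‖) := by
    intro x
    have h1 := abs_real_inner_le_norm (gradient (fun z => w (ε⁻¹ • (z - yi))) x)
      (gradient (fun z => w (ε⁻¹ • (z - yj))) x)
    have h2 : ‖gradient (fun z => w (ε⁻¹ • (z - yi))) x‖
        ≤ ε⁻¹ * (C₀ * F η ‖ε⁻¹ • (x - yi)‖) := by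
      rw [grad_norm hwC1 hεne yi x, habs]
      exact mul_le_mul_of_nonneg_left (hdecayF _) (by positivity)
    have h3 : ‖gradient (fun z => w (ε⁻¹ • (z - yj))) x‖
        ≤ ε⁻¹ * (C₀ * F η ‖ε⁻¹ • (x - yj)‖) := by
      rw [grad_norm hwC1 hεne yj x, habs]
      exact mul_le_mul_of_nonneg_left (hdecayF _) (by positivity)
    have h4 : ‖gradient (fun z => w (ε⁻¹ • (z - yi))) x‖ *
          ‖gradient (fun z => w (ε⁻¹ • (z - yj))) x‖
        ≤ (ε⁻¹ * (C₀ * F η ‖ε⁻¹ • (x - yi)‖)) * (ε⁻¹ * (C₀ * F η ‖ε⁻¹ • (x - yj)‖)) :=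
      mul_le_mul h2 h3 (norm_nonneg _)
        (mul_nonneg (by positivity) (mul_nonneg hC₀.le (hF0 _)))
    calc |(inner ℝ (gradient (fun z => w (ε⁻¹ • (z - yi))) x)
          (gradient (fun z => w (ε⁻¹ • (z - yj))) x) : ℝ)|
        ≤ ‖gradient (fun z => w (ε⁻¹ • (z - yi))) x‖ *
          ‖gradient (fun z => w (ε⁻¹ • (z - yj))) x‖ := h1
      _ ≤ (ε⁻¹ * (C₀ * F η ‖ε⁻¹ • (x - yi)‖)) * (ε⁻¹ * (C₀ * F η ‖ε⁻¹ • (x - yj)‖)) := h4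
      _ = c * (F η ‖ε⁻¹ • (x - yi)‖ * F η ‖ε⁻¹ • (x - yj)‖) := by
          rw [hcdef]; ring
  have hFFcont : Continuous fun x : E3 => F η ‖ε⁻¹ • (x - yi)‖ * F η ‖ε⁻¹ • (x - yj)‖ :=
    ((Fnormcont η).comp ((continuous_id.sub continuous_const).const_smul ε⁻¹)).mul
      ((Fnormcont η).comp ((continuous_id.sub continuous_const).const_smul ε⁻¹))
  have hgmeas : Measurable fun z : E3 =>
      ENNReal.ofReal (F η ‖ε⁻¹ • (z - yi)‖ * F η ‖ε⁻¹ • (z - yj)‖) :=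
    (ENNReal.continuous_ofReal.comp hFFcont).measurable
  set d : E3 := ε⁻¹ • (yj - yi) with hddef
  have hdnorm : ‖d‖ = ‖yi - yj‖ / ε := by
    rw [hddef, norm_smul, Real.norm_eq_abs, habs, norm_sub_rev, inv_mul_eq_div]
  have hcov : ∫⁻ z : E3, ENNReal.ofReal (F η ‖ε⁻¹ • (z - yi)‖ * F η ‖ε⁻¹ • (z - yj)‖)
      = ENNReal.ofReal (ε^3) * ∫⁻ z : E3, ENNReal.ofReal (F η ‖z‖ * F η ‖z - d‖) := by
    rw [lintegral_scale_shift hε yi _ hgmeas]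
    congr 1
    apply lintegral_congr
    intro z
    have e1 : ε⁻¹ • (yi + ε • z - yi) = z := by
      rw [add_sub_cancel_left, smul_smul, inv_mul_cancel₀ hεne, one_smul]
    have e2 : ε⁻¹ • (yi + ε • z - yj) = z - d := by
      rw [hddef]
      have e3 : yi + ε • z - yj = ε • z - (yj - yi) := by abel
      rw [e3, smul_sub, smul_smul, inv_mul_cancel₀ hεne, one_smul]
    rw [e1, e2]
  have hcore : ∫⁻ z : E3, ENNReal.ofReal (F η ‖z‖ * F η ‖z - d‖)
      ≤ ENNReal.ofReal (K * Real.exp (-(η * ‖d‖))) := by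
    have h := core hη d
    rwa [← hKdef] at h
  have hchain : (∫⁻ x : E3, ENNReal.ofReal
        |(inner ℝ (gradient (fun z => w (ε⁻¹ • (z - yi))) x)
          (gradient (fun z => w (ε⁻¹ • (z - yj))) x) : ℝ)|)
      ≤ ENNReal.ofReal (C₀^2 * K * ε * Real.exp (-η * ‖yi - yj‖ / ε)) := by
    calc (∫⁻ x : E3, ENNReal.ofReal
          |(inner ℝ (gradient (fun z => w (ε⁻¹ • (z - yi))) x)
            (gradient (fun z => w (ε⁻¹ • (z - yj))) x) : ℝ)|)
        ≤ ∫⁻ x : E3, ENNReal.ofReal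
            (c * (F η ‖ε⁻¹ • (x - yi)‖ * F η ‖ε⁻¹ • (x - yj)‖)) :=
          lintegral_mono fun x => ENNReal.ofReal_le_ofReal (hpt x)
      _ = ENNReal.ofReal c * ∫⁻ x : E3, ENNReal.ofReal
            (F η ‖ε⁻¹ • (x - yi)‖ * F η ‖ε⁻¹ • (x - yj)‖) := by
          simp_rw [ENNReal.ofReal_mul hc]
          exact lintegral_const_mul' _ _ ENNReal.ofReal_ne_top
      _ = ENNReal.ofReal c * (ENNReal.ofReal (ε^3) *
            ∫⁻ z : E3, ENNReal.ofReal (F η ‖z‖ * F η ‖z - d‖)) := by rw [hcov]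
      _ ≤ ENNReal.ofReal c * (ENNReal.ofReal (ε^3) *
            ENNReal.ofReal (K * Real.exp (-(η * ‖d‖)))) :=
          mul_le_mul_right (mul_le_mul_right hcore _) _
      _ = ENNReal.ofReal (c * (ε^3 * (K * Real.exp (-(η * ‖d‖))))) := by
          rw [← ENNReal.ofReal_mul (by positivity), ← ENNReal.ofReal_mul hc]
      _ = ENNReal.ofReal (C₀^2 * K * ε * Real.exp (-η * ‖yi - yj‖ / ε)) := by
          apply congrArg
          rw [hdnorm, hcdef]
          have e4 : -(η * (‖yi - yj‖ / ε)) = -η * ‖yi - yj‖ / ε := by ring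
          rw [e4]
          field_simp
  have hfin := ENNReal.toReal_mono ENNReal.ofReal_ne_top hchain
  rw [ENNReal.toReal_ofReal (by positivity)] at hfin
  exact hfin


end
end

section
/- For every q with 2 < q ≤ 3 there exists a constant C > 0 such that for all e, f ∈ ℝ: |(e+f)₊^q − e₊^q − q·e₊^{q−1}f − (q(q−1)/2)·e₊^{q−2}f²| ≤ C|f|^q, where t₊ = max(t, 0) and the term e₊^{q−2}f² is understood to be 0 when e ≤ 0. -/
noncomputable section
open scoped NNReal

/-- subadditivity-type bound: for `0 ≤ b ≤ a` and `α ∈ [0,1]`, `a^α - b^α ≤ (a-b)^α`. -/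
lemma rpow_sub_le_aux {α a b : ℝ} (h0 : 0 ≤ α) (h1 : α ≤ 1) (hb : 0 ≤ b) (hba : b ≤ a) :
    a ^ α - b ^ α ≤ (a - b) ^ α := by
  have ha : 0 ≤ a - b := by linarith
  have key : ((a - b).toNNReal + b.toNNReal) ^ α ≤ (a - b).toNNReal ^ α + b.toNNReal ^ α :=
    NNReal.rpow_add_le_add_rpow _ _ h0 h1
  have key' := NNReal.coe_le_coe.2 key
  rw [NNReal.coe_rpow, NNReal.coe_add, NNReal.coe_add, NNReal.coe_rpow, NNReal.coe_rpow,
    Real.coe_toNNReal _ ha, Real.coe_toNNReal _ hb] at key'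
  have hab : a - b + b = a := by ring
  rw [hab] at key'
  linarith

/-- `|a^α - b^α| ≤ |a-b|^α` for nonneg a b, α ∈ [0,1]. -/
lemma abs_rpow_sub_rpow_le {α a b : ℝ} (h0 : 0 ≤ α) (h1 : α ≤ 1) (ha : 0 ≤ a) (hb : 0 ≤ b) :
    |a ^ α - b ^ α| ≤ |a - b| ^ α := by
  rcases le_total b a with h | h
  · rw [abs_of_nonneg (by linarith : (0:ℝ) ≤ a - b)]
    have h2 := rpow_sub_le_aux h0 h1 hb h
    have h3 : b ^ α ≤ a ^ α := Real.rpow_le_rpow hb h h0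
    rw [abs_of_nonneg (by linarith)]
    exact h2
  · rw [abs_of_nonpos (by linarith : a - b ≤ 0)]
    have h2 := rpow_sub_le_aux h0 h1 ha h
    have h3 : a ^ α ≤ b ^ α := Real.rpow_le_rpow ha h h0
    rw [abs_of_nonpos (by linarith), neg_sub]
    have hnb : -(a - b) = b - a := by ring
    rw [hnb]
    exact h2

/-- first order Taylor bound for `t ↦ t^(q-1)` -/
lemma inner_taylor {q : ℝ} (hq1 : 2 < q) (hq2 : q ≤ 3) {x y : ℝ} (hx : 0 < x) (hy : 0 < y) :
    |y ^ (q-1) - x ^ (q-1) - (q-1) * x ^ (q-2) * (y - x)| ≤ (q-1) * |y - x| ^ (q-1) := by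
  have hα0 : (0:ℝ) ≤ q - 2 := by linarith
  have hα1 : q - 2 ≤ 1 := by linarith
  rcases eq_or_ne y x with rfl | hne
  · have hz : y ^ (q-1) - y ^ (q-1) - (q-1) * y ^ (q-2) * (y - y) = 0 := by ring
    rw [hz, abs_zero]
    exact mul_nonneg (by linarith) (Real.rpow_nonneg (abs_nonneg _) _)
  have hderiv : ∀ t : ℝ, HasDerivAt (fun s : ℝ => s ^ (q-1)) ((q-1) * t ^ (q-1-1)) t := by
    intro t
    exact Real.hasDerivAt_rpow_const (Or.inr (by linarith))
  have key : ∃ c : ℝ, (min x y < c ∧ c < max x y) ∧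
      y ^ (q-1) - x ^ (q-1) = (q-1) * c ^ (q-2) * (y - x) := by
    rcases lt_or_gt_of_ne hne with h | h
    · -- y < x : MVT on [y, x]
      obtain ⟨c, hc, hceq⟩ := exists_hasDerivAt_eq_slope (fun s : ℝ => s ^ (q-1))
        (fun t => (q-1) * t ^ (q-1-1)) h
        (fun t _ => (hderiv t).continuousAt.continuousWithinAt)
        (fun t _ => hderiv t)
      have hceq' : (q-1) * c ^ (q-1-1) = (x ^ (q-1) - y ^ (q-1)) / (x - y) := hceq
      refine ⟨c, ⟨by rw [min_eq_right h.le]; exact hc.1, by rw [max_eq_left h.le]; exact hc.2⟩, ?_⟩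
      rw [eq_div_iff (sub_ne_zero.mpr h.ne')] at hceq'
      have he2 : q - 1 - 1 = q - 2 := by ring
      rw [he2] at hceq'
      nlinarith [hceq']
    · -- x < y : MVT on [x, y]
      obtain ⟨c, hc, hceq⟩ := exists_hasDerivAt_eq_slope (fun s : ℝ => s ^ (q-1))
        (fun t => (q-1) * t ^ (q-1-1)) h
        (fun t _ => (hderiv t).continuousAt.continuousWithinAt)
        (fun t _ => hderiv t)
      have hceq' : (q-1) * c ^ (q-1-1) = (y ^ (q-1) - x ^ (q-1)) / (y - x) := hceq
      refine ⟨c, ⟨by rw [min_eq_left h.le]; exact hc.1, by rw [max_eq_right h.le]; exact hc.2⟩, ?_⟩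
      rw [eq_div_iff (sub_ne_zero.mpr h.ne')] at hceq'
      have he2 : q - 1 - 1 = q - 2 := by ring
      rw [he2] at hceq'
      nlinarith [hceq']
  obtain ⟨c, ⟨hc1, hc2⟩, hceq⟩ := key
  have hcpos : 0 < c := lt_of_le_of_lt (le_min hx.le hy.le) hc1
  have hexpr : y ^ (q-1) - x ^ (q-1) - (q-1) * x ^ (q-2) * (y - x)
      = (q-1) * (c ^ (q-2) - x ^ (q-2)) * (y - x) := by
    rw [hceq]; ring
  rw [hexpr, abs_mul, abs_mul, abs_of_nonneg (by linarith : (0:ℝ) ≤ q - 1)]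
  have h1 : |c ^ (q-2) - x ^ (q-2)| ≤ |c - x| ^ (q-2) :=
    abs_rpow_sub_rpow_le hα0 hα1 hcpos.le hx.le
  have h2 : |c - x| ≤ |y - x| := by
    rw [abs_le]
    rcases le_total x y with h | h
    · rw [min_eq_left h] at hc1
      rw [max_eq_right h] at hc2
      rw [abs_of_nonneg (by linarith : (0:ℝ) ≤ y - x)]
      constructor <;> linarith
    · rw [min_eq_right h] at hc1
      rw [max_eq_left h] at hc2
      rw [abs_of_nonpos (by linarith : y - x ≤ 0)]
      constructor <;> linarith
  have h3 : |c - x| ^ (q-2) ≤ |y - x| ^ (q-2) :=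
    Real.rpow_le_rpow (abs_nonneg _) h2 hα0
  have hfz : (0:ℝ) < |y - x| := by
    rw [abs_pos]; intro hh; apply hne; linarith
  have h4 : |y - x| ^ (q-2) * |y - x| = |y - x| ^ (q-1) := by
    nth_rewrite 2 [← Real.rpow_one |y - x|]
    rw [← Real.rpow_add hfz]
    congr 1
    ring
  calc (q-1) * |c ^ (q-2) - x ^ (q-2)| * |y - x|
      ≤ (q-1) * (|y - x| ^ (q-2)) * |y - x| := by
        exact mul_le_mul_of_nonneg_right
          (mul_le_mul_of_nonneg_left (le_trans h1 h3) (by linarith)) (abs_nonneg _)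
    _ = (q-1) * |y - x| ^ (q-1) := by rw [mul_assoc, h4]

/-- second order Taylor bound for `t ↦ t^q` -/
lemma outer_taylor {q : ℝ} (hq1 : 2 < q) (hq2 : q ≤ 3) {x y : ℝ} (hx : 0 < x) (hy : 0 < y) :
    |y ^ q - x ^ q - q * x ^ (q-1) * (y - x) - q * (q-1) / 2 * x ^ (q-2) * (y - x)^2|
      ≤ q * (q-1) * |y - x| ^ q := by
  rcases eq_or_ne y x with rfl | hne
  · have hz : y ^ q - y ^ q - q * y ^ (q-1) * (y - y) - q * (q-1) / 2 * y ^ (q-2) * (y - y)^2 = 0 := by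
      ring
    rw [hz, abs_zero]
    have : (0:ℝ) ≤ q * (q-1) := by nlinarith
    exact mul_nonneg this (Real.rpow_nonneg (abs_nonneg _) _)
  set G : ℝ → ℝ := fun t => t ^ q - x ^ q - q * x ^ (q-1) * (t - x) - q * (q-1) / 2 * x ^ (q-2) * (t - x)^2 with hG
  set G' : ℝ → ℝ := fun t => q * t ^ (q-1) - q * x ^ (q-1) - q * (q-1) * x ^ (q-2) * (t - x) with hG'
  have hderiv : ∀ t : ℝ, HasDerivAt G (G' t) t := by
    intro t
    have h1 : HasDerivAt (fun s : ℝ => s ^ q) (q * t ^ (q-1)) t := by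
      exact Real.hasDerivAt_rpow_const (Or.inr (by linarith))
    have h2 : HasDerivAt (fun s : ℝ => q * x ^ (q-1) * (s - x)) (q * x ^ (q-1)) t := by
      simpa using ((hasDerivAt_id t).sub_const x).const_mul (q * x ^ (q-1))
    have h3 : HasDerivAt (fun s : ℝ => q * (q-1) / 2 * x ^ (q-2) * (s - x)^2)
        (q * (q-1) / 2 * x ^ (q-2) * (2 * (t - x))) t := by
      have := (((hasDerivAt_id t).sub_const x).pow 2).const_mul (q * (q-1) / 2 * x ^ (q-2))
      simpa using this
    have hcomb : HasDerivAt G _ t := ((h1.sub_const (x ^ q)).sub h2).sub h3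
    convert hcomb using 1
    simp only [hG']
    ring
  have key : ∃ c : ℝ, (min x y < c ∧ c < max x y) ∧
      G y = G' c * (y - x) := by
    rcases lt_or_gt_of_ne hne with h | h
    · obtain ⟨c, hc, hceq⟩ := exists_hasDerivAt_eq_slope G G' h
        (fun t _ => (hderiv t).continuousAt.continuousWithinAt)
        (fun t _ => hderiv t)
      refine ⟨c, ⟨by rw [min_eq_right h.le]; exact hc.1, by rw [max_eq_left h.le]; exact hc.2⟩, ?_⟩
      rw [eq_div_iff (sub_ne_zero.mpr h.ne')] at hceq
      have hGx : G x = 0 := by simp [hG]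
      rw [hGx] at hceq
      nlinarith [hceq]
    · obtain ⟨c, hc, hceq⟩ := exists_hasDerivAt_eq_slope G G' h
        (fun t _ => (hderiv t).continuousAt.continuousWithinAt)
        (fun t _ => hderiv t)
      refine ⟨c, ⟨by rw [min_eq_left h.le]; exact hc.1, by rw [max_eq_right h.le]; exact hc.2⟩, ?_⟩
      rw [eq_div_iff (sub_ne_zero.mpr h.ne')] at hceq
      have hGx : G x = 0 := by simp [hG]
      rw [hGx] at hceq
      nlinarith [hceq]
  obtain ⟨c, ⟨hc1, hc2⟩, hceq⟩ := key
  have hcpos : 0 < c := lt_of_le_of_lt (le_min hx.le hy.le) hc1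
  have hcx : |c - x| ≤ |y - x| := by
    rw [abs_le]
    rcases le_total x y with h | h
    · rw [min_eq_left h] at hc1
      rw [max_eq_right h] at hc2
      rw [abs_of_nonneg (by linarith : (0:ℝ) ≤ y - x)]
      constructor <;> linarith
    · rw [min_eq_right h] at hc1
      rw [max_eq_left h] at hc2
      rw [abs_of_nonpos (by linarith : y - x ≤ 0)]
      constructor <;> linarith
  have hin : |c ^ (q-1) - x ^ (q-1) - (q-1) * x ^ (q-2) * (c - x)| ≤ (q-1) * |y - x| ^ (q-1) := by
    calc |c ^ (q-1) - x ^ (q-1) - (q-1) * x ^ (q-2) * (c - x)|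
        ≤ (q-1) * |c - x| ^ (q-1) := inner_taylor hq1 hq2 hx hcpos
      _ ≤ (q-1) * |y - x| ^ (q-1) := by
          have := Real.rpow_le_rpow (abs_nonneg _) hcx (by linarith : (0:ℝ) ≤ q - 1)
          nlinarith
  have hfz : (0:ℝ) < |y - x| := by
    rw [abs_pos]; intro hh; apply hne; linarith
  have hq0 : (0:ℝ) < q := by linarith
  have hmul : |y - x| ^ (q-1) * |y - x| = |y - x| ^ q := by
    nth_rewrite 2 [← Real.rpow_one |y - x|]
    rw [← Real.rpow_add hfz]
    congr 1
    ring
  have hGc : G' c = q * (c ^ (q-1) - x ^ (q-1) - (q-1) * x ^ (q-2) * (c - x)) := by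
    simp only [hG']; ring
  have hgoal : |G y| ≤ q * (q-1) * |y - x| ^ q := by
    rw [hceq, hGc, abs_mul, abs_mul, abs_of_nonneg hq0.le]
    calc q * |c ^ (q-1) - x ^ (q-1) - (q-1) * x ^ (q-2) * (c - x)| * |y - x|
        ≤ q * ((q-1) * |y - x| ^ (q-1)) * |y - x| :=
          mul_le_mul_of_nonneg_right (mul_le_mul_of_nonneg_left hin hq0.le) (abs_nonneg _)
      _ = q * (q-1) * (|y - x| ^ (q-1) * |y - x|) := by ring
      _ = q * (q-1) * |y - x| ^ q := by rw [hmul]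
  simpa [hG] using hgoal

theorem statement17 (q : ℝ) (hq1 : 2 < q) (hq2 : q ≤ 3) :
    ∃ C > 0, ∀ e f : ℝ,
      |(max (e + f) 0) ^ q - (max e 0) ^ q - q * (max e 0) ^ (q - 1) * f
          - q * (q - 1) / 2 * (max e 0) ^ (q - 2) * f ^ 2|
        ≤ C * |f| ^ q := by
  have hq0 : (0:ℝ) < q := by linarith
  have h1 : (0:ℝ) < (3:ℝ) ^ q := Real.rpow_pos_of_pos (by norm_num) _
  have h2 : (0:ℝ) < (2:ℝ) ^ q := Real.rpow_pos_of_pos (by norm_num) _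
  have h3 : (0:ℝ) ≤ (2:ℝ) ^ (q-1) := (Real.rpow_pos_of_pos (by norm_num) _).le
  have h4 : (0:ℝ) ≤ (2:ℝ) ^ (q-2) := (Real.rpow_pos_of_pos (by norm_num) _).le
  have h5 : (0:ℝ) < q * (q-1) := mul_pos hq0 (by linarith)
  have h6 : (0:ℝ) ≤ q * 2 ^ (q-1) := mul_nonneg hq0.le h3
  have h7 : (0:ℝ) ≤ q * (q-1) / 2 * 2 ^ (q-2) := mul_nonneg (by linarith) h4
  have hCpos : (0:ℝ) < 3 ^ q + 2 ^ q + q * 2 ^ (q-1) + q * (q-1) / 2 * 2 ^ (q-2) + q * (q-1) := by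
    linarith
  refine ⟨3 ^ q + 2 ^ q + q * 2 ^ (q-1) + q * (q-1) / 2 * 2 ^ (q-2) + q * (q-1), hCpos, ?_⟩
  intro e f
  rcases eq_or_ne f 0 with rfl | hf
  · have hz : max (e + 0) 0 ^ q - max e 0 ^ q - q * max e 0 ^ (q-1) * 0
        - q * (q-1) / 2 * max e 0 ^ (q-2) * 0 ^ 2 = 0 := by
      rw [add_zero]; ring
    rw [hz, abs_zero]
    exact mul_nonneg hCpos.le (Real.rpow_nonneg le_rfl _)
  have hfpos : (0:ℝ) < |f| := abs_pos.mpr hf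
  set a := max e 0 with ha
  set b := max (e + f) 0 with hb
  have ha0 : 0 ≤ a := le_max_right _ _
  have hb0 : 0 ≤ b := le_max_right _ _
  rcases le_or_gt e (2 * |f|) with hcase | hcase
  · -- small e case: bound each term
    have haf : a ≤ 2 * |f| := max_le hcase (by positivity)
    have hbf : b ≤ 3 * |f| := by
      apply max_le _ (by positivity)
      have := le_abs_self f
      linarith
    have hbq : b ^ q ≤ 3 ^ q * |f| ^ q := by
      calc b ^ q ≤ (3 * |f|) ^ q := Real.rpow_le_rpow hb0 hbf hq0.le
        _ = 3 ^ q * |f| ^ q := Real.mul_rpow (by norm_num) (abs_nonneg _)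
    have haq : a ^ q ≤ 2 ^ q * |f| ^ q := by
      calc a ^ q ≤ (2 * |f|) ^ q := Real.rpow_le_rpow ha0 haf hq0.le
        _ = 2 ^ q * |f| ^ q := Real.mul_rpow (by norm_num) (abs_nonneg _)
    have hmul1 : |f| ^ (q-1) * |f| = |f| ^ q := by
      nth_rewrite 2 [← Real.rpow_one |f|]
      rw [← Real.rpow_add hfpos]
      congr 1
      ring
    have hmul2 : |f| ^ (q-2) * |f| ^ (2:ℕ) = |f| ^ q := by
      rw [← Real.rpow_natCast |f| 2, ← Real.rpow_add hfpos]
      congr 1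
      push_cast
      ring
    have ht1 : |q * a ^ (q-1) * f| ≤ q * 2 ^ (q-1) * |f| ^ q := by
      rw [abs_mul, abs_mul, abs_of_nonneg hq0.le, abs_of_nonneg (Real.rpow_nonneg ha0 _)]
      have h1 : a ^ (q-1) ≤ (2 * |f|) ^ (q-1) := Real.rpow_le_rpow ha0 haf (by linarith)
      have h2 : ((2:ℝ) * |f|) ^ (q-1) = 2 ^ (q-1) * |f| ^ (q-1) :=
        Real.mul_rpow (by norm_num) (abs_nonneg _)
      rw [h2] at h1
      calc q * a ^ (q-1) * |f| ≤ q * (2 ^ (q-1) * |f| ^ (q-1)) * |f| :=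
            mul_le_mul_of_nonneg_right (mul_le_mul_of_nonneg_left h1 hq0.le) (abs_nonneg _)
        _ = q * 2 ^ (q-1) * (|f| ^ (q-1) * |f|) := by ring
        _ = q * 2 ^ (q-1) * |f| ^ q := by rw [hmul1]
    have ht2 : |q * (q-1) / 2 * a ^ (q-2) * f ^ 2| ≤ q * (q-1) / 2 * 2 ^ (q-2) * |f| ^ q := by
      have hcoef : (0:ℝ) ≤ q * (q-1) / 2 := by nlinarith
      rw [abs_mul, abs_mul, abs_of_nonneg hcoef, abs_of_nonneg (Real.rpow_nonneg ha0 _),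
        abs_of_nonneg (sq_nonneg f)]
      have h1 : a ^ (q-2) ≤ (2 * |f|) ^ (q-2) := Real.rpow_le_rpow ha0 haf (by linarith)
      have h2 : ((2:ℝ) * |f|) ^ (q-2) = 2 ^ (q-2) * |f| ^ (q-2) :=
        Real.mul_rpow (by norm_num) (abs_nonneg _)
      rw [h2] at h1
      have hf2 : f ^ 2 = |f| ^ (2:ℕ) := (sq_abs f).symm
      calc q * (q-1) / 2 * a ^ (q-2) * f ^ 2
          ≤ q * (q-1) / 2 * (2 ^ (q-2) * |f| ^ (q-2)) * f ^ 2 :=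
            mul_le_mul_of_nonneg_right (mul_le_mul_of_nonneg_left h1 hcoef) (sq_nonneg f)
        _ = q * (q-1) / 2 * 2 ^ (q-2) * (|f| ^ (q-2) * |f| ^ (2:ℕ)) := by rw [hf2]; ring
        _ = q * (q-1) / 2 * 2 ^ (q-2) * |f| ^ q := by rw [hmul2]
    have hbq0 : 0 ≤ b ^ q := Real.rpow_nonneg hb0 _
    have haq0 : 0 ≤ a ^ q := Real.rpow_nonneg ha0 _
    have habs : |b ^ q - a ^ q - q * a ^ (q-1) * f - q * (q-1) / 2 * a ^ (q-2) * f ^ 2|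
        ≤ b ^ q + a ^ q + |q * a ^ (q-1) * f| + |q * (q-1) / 2 * a ^ (q-2) * f ^ 2| := by
      have t1 := abs_sub (b ^ q - a ^ q - q * a ^ (q-1) * f) (q * (q-1) / 2 * a ^ (q-2) * f ^ 2)
      have t2 := abs_sub (b ^ q - a ^ q) (q * a ^ (q-1) * f)
      have t3 := abs_sub (b ^ q) (a ^ q)
      rw [abs_of_nonneg hbq0, abs_of_nonneg haq0] at t3
      linarith
    have hfq0 : (0:ℝ) ≤ |f| ^ q := Real.rpow_nonneg (abs_nonneg _) _
    calc |b ^ q - a ^ q - q * a ^ (q-1) * f - q * (q-1) / 2 * a ^ (q-2) * f ^ 2|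
        ≤ b ^ q + a ^ q + |q * a ^ (q-1) * f| + |q * (q-1) / 2 * a ^ (q-2) * f ^ 2| := habs
      _ ≤ 3 ^ q * |f| ^ q + 2 ^ q * |f| ^ q + q * 2 ^ (q-1) * |f| ^ q
            + q * (q-1) / 2 * 2 ^ (q-2) * |f| ^ q := by linarith
      _ ≤ (3 ^ q + 2 ^ q + q * 2 ^ (q-1) + q * (q-1) / 2 * 2 ^ (q-2) + q * (q-1)) * |f| ^ q := by
          nlinarith [mul_nonneg h5.le hfq0]
  · -- large e case: Taylor
    have he : 0 < e := by linarith
    have hef : 0 < e + f := by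
      have := neg_abs_le f
      linarith
    have hae : a = e := max_eq_left he.le
    have hbe : b = e + f := max_eq_left hef.le
    have htay := outer_taylor hq1 hq2 he hef
    rw [hae, hbe]
    have heq : e + f - e = f := by ring
    rw [heq] at htay
    have hfq0 : (0:ℝ) ≤ |f| ^ q := Real.rpow_nonneg (abs_nonneg _) _
    calc |(e + f) ^ q - e ^ q - q * e ^ (q-1) * f - q * (q-1) / 2 * e ^ (q-2) * f ^ 2|
        ≤ q * (q-1) * |f| ^ q := htay
      _ ≤ (3 ^ q + 2 ^ q + q * 2 ^ (q-1) + q * (q-1) / 2 * 2 ^ (q-2) + q * (q-1)) * |f| ^ q := by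
          nlinarith [mul_nonneg h1.le hfq0, mul_nonneg h2.le hfq0, mul_nonneg h6 hfq0,
            mul_nonneg h7 hfq0]

end
end

section
/- For every q with 3 < q < 6 there exists a constant C > 0 such that for all e, f ∈ ℝ: |(e+f)₊^q − e₊^q − q·e₊^{q−1}f − (q(q−1)/2)·e₊^{q−2}f²| ≤ C(|e|^{q−3} + |f|^{q−3})|f|³, where t₊ = max(t, 0). -/
noncomputable section

open Set Filter Topology

/-- derivative of `x ↦ (x⁺)^(s+1)` is `(s+1) (x⁺)^s`, for `s > 0`. -/
lemma hasDerivAt_pospow {s : ℝ} (hs : 0 < s) (x : ℝ) :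
    HasDerivAt (fun y : ℝ => (max y 0) ^ (s + 1)) ((s + 1) * (max x 0) ^ s) x := by
  rcases lt_trichotomy x 0 with hx | hx | hx
  · have hval : (s + 1) * (max x 0) ^ s = 0 := by
      rw [max_eq_right hx.le, Real.zero_rpow hs.ne', mul_zero]
    rw [hval]
    apply (hasDerivAt_const x (0:ℝ)).congr_of_eventuallyEq
    filter_upwards [Iio_mem_nhds hx] with y hy
    rw [max_eq_right (le_of_lt hy), Real.zero_rpow (by positivity)]
  · subst hx
    have hval : (s + 1) * (max (0:ℝ) 0) ^ s = 0 := by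
      rw [max_self, Real.zero_rpow hs.ne', mul_zero]
    rw [hval]
    rw [hasDerivAt_iff_isLittleO_nhds_zero]
    rw [Asymptotics.isLittleO_iff]
    intro c hc
    have htend : Tendsto (fun h : ℝ => |h| ^ s) (𝓝 0) (𝓝 0) := by
      have h1 : ContinuousAt (fun t : ℝ => t ^ s) 0 :=
        Real.continuousAt_rpow_const 0 s (Or.inr hs.le)
      have h2 : Tendsto (fun h : ℝ => |h|) (𝓝 0) (𝓝 0) := by
        simpa using continuous_abs.tendsto (0:ℝ)
      have := h1.tendsto.comp h2
      simpa [Function.comp_def, Real.zero_rpow hs.ne'] using this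
    filter_upwards [htend.eventually (ge_mem_nhds hc)] with h hh
    have h0 : (0:ℝ) ≤ max h 0 := le_max_right _ _
    have hle : max h 0 ≤ |h| := max_le (le_abs_self h) (abs_nonneg h)
    simp only [zero_add, max_self, Real.zero_rpow (by positivity : s + 1 ≠ 0), sub_zero,
      smul_zero, Real.norm_eq_abs]
    rcases eq_or_ne h 0 with rfl | hne
    · simp [Real.zero_rpow (by positivity : s + 1 ≠ 0)]
    · have : (max h 0) ^ (s + 1) ≤ |h| ^ (s + 1) :=
        Real.rpow_le_rpow h0 hle (by positivity)
      have habs : |h| ^ (s + 1) = |h| ^ s * |h| := by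
        rw [Real.rpow_add (abs_pos.mpr hne), Real.rpow_one]
      have hnn : (0:ℝ) ≤ (max h 0) ^ (s + 1) := Real.rpow_nonneg h0 _
      rw [abs_of_nonneg hnn]
      calc (max h 0) ^ (s + 1) ≤ |h| ^ s * |h| := by rw [← habs]; exact this
        _ ≤ c * |h| := by
            apply mul_le_mul_of_nonneg_right hh (abs_nonneg h)
  · have hx' : HasDerivAt (fun y : ℝ => y ^ (s + 1)) ((s + 1) * x ^ (s + 1 - 1)) x :=
      Real.hasDerivAt_rpow_const (Or.inl hx.ne')
    have he : s + 1 - 1 = s := by ring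
    rw [he] at hx'
    have hval : (s + 1) * (max x 0) ^ s = (s + 1) * x ^ s := by
      rw [max_eq_left hx.le]
    rw [hval]
    apply hx'.congr_of_eventuallyEq
    filter_upwards [Ioi_mem_nhds hx] with y hy
    rw [max_eq_left (le_of_lt hy)]

theorem statement18 (q : ℝ) (hq1 : 3 < q) (hq2 : q < 6) :
    ∃ C > 0, ∀ e f : ℝ,
      |(max (e + f) 0) ^ q - (max e 0) ^ q - q * (max e 0) ^ (q - 1) * f
          - q * (q - 1) / 2 * (max e 0) ^ (q - 2) * f ^ 2|
        ≤ C * (|e| ^ (q - 3) + |f| ^ (q - 3)) * |f| ^ 3 := by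
  have h1 : (0:ℝ) < q - 1 := by linarith
  have h2 : (0:ℝ) < q - 2 := by linarith
  have h3 : (0:ℝ) < q - 3 := by linarith
  have hq0 : (0:ℝ) < q := by linarith
  have h2pow : (0:ℝ) < (2:ℝ) ^ (q - 3) := Real.rpow_pos_of_pos two_pos _
  refine ⟨q * (q - 1) * (q - 2) * 2 ^ (q - 3), by positivity, ?_⟩
  intro e f
  -- derivatives
  have D1 : ∀ x : ℝ, HasDerivAt (fun y : ℝ => (max y 0) ^ q) (q * (max x 0) ^ (q - 1)) x := by
    intro x
    have := hasDerivAt_pospow h1 x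
    have he : q - 1 + 1 = q := by ring
    rw [he] at this
    exact this
  have D2 : ∀ x : ℝ, HasDerivAt (fun y : ℝ => (max y 0) ^ (q - 1))
      ((q - 1) * (max x 0) ^ (q - 2)) x := by
    intro x
    have := hasDerivAt_pospow h2 x
    have he : q - 2 + 1 = q - 1 := by ring
    rw [he] at this
    exact this
  have D3 : ∀ x : ℝ, HasDerivAt (fun y : ℝ => (max y 0) ^ (q - 2))
      ((q - 2) * (max x 0) ^ (q - 3)) x := by
    intro x
    have := hasDerivAt_pospow h3 x
    have he : q - 3 + 1 = q - 2 := by ring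
    rw [he] at this
    exact this
  set S : Set ℝ := uIcc e (e + f) with hSdef
  have hS : Convex ℝ S := convex_uIcc _ _
  have heS : e ∈ S := left_mem_uIcc
  have hfS : e + f ∈ S := right_mem_uIcc
  have hdist : ∀ x ∈ S, |x - e| ≤ |f| := by
    intro x hx
    have := Real.dist_le_of_mem_uIcc hx heS
    simpa [Real.dist_eq, abs_sub_comm] using this
  set A : ℝ := |e| + |f| with hAdef
  have hA0 : 0 ≤ A := by positivity
  have hP3 : ∀ x ∈ S, (max x 0) ^ (q - 3) ≤ A ^ (q - 3) := by
    intro x hx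
    apply Real.rpow_le_rpow (le_max_right _ _) ?_ h3.le
    have hxa : |x| ≤ A := by
      have h := hdist x hx
      calc |x| = |x - e + e| := by ring_nf
        _ ≤ |x - e| + |e| := abs_add_le _ _
        _ ≤ A := by rw [hAdef]; linarith
    exact le_trans (max_le (le_abs_self x) (abs_nonneg x)) hxa
  set K : ℝ := q * (q - 1) * (q - 2) * A ^ (q - 3) with hKdef
  have hK0 : 0 ≤ K := by positivity
  -- Step 1: bound on variation of second derivative
  have step1 : ∀ x ∈ S,
      |q * (q - 1) * (max x 0) ^ (q - 2) - q * (q - 1) * (max e 0) ^ (q - 2)| ≤ K * |f| := by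
    intro x hx
    have mvt := Convex.norm_image_sub_le_of_norm_hasDerivWithin_le
      (f := fun y : ℝ => q * (q - 1) * (max y 0) ^ (q - 2))
      (f' := fun y : ℝ => q * (q - 1) * ((q - 2) * (max y 0) ^ (q - 3)))
      (s := S) (C := K)
      (fun y _ => (((D3 y).const_mul (q * (q - 1)))).hasDerivWithinAt)
      (fun y hy => by
        rw [Real.norm_eq_abs, abs_of_nonneg (by positivity)]
        calc q * (q - 1) * ((q - 2) * (max y 0) ^ (q - 3))
            = q * (q - 1) * (q - 2) * (max y 0) ^ (q - 3) := by ring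
          _ ≤ K := by
              rw [hKdef]
              exact mul_le_mul_of_nonneg_left (hP3 y hy) (by positivity))
      hS heS hx
    rw [Real.norm_eq_abs, Real.norm_eq_abs] at mvt
    exact mvt.trans (mul_le_mul_of_nonneg_left (hdist x hx) hK0)
  -- Step 2
  have step2 : ∀ x ∈ S,
      |q * (max x 0) ^ (q - 1) - q * (max e 0) ^ (q - 1)
        - q * (q - 1) * (max e 0) ^ (q - 2) * (x - e)| ≤ K * |f| * |f| := by
    intro x hx
    have mvt := Convex.norm_image_sub_le_of_norm_hasDerivWithin_le
      (f := fun y : ℝ => q * (max y 0) ^ (q - 1) - q * (max e 0) ^ (q - 1)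
        - q * (q - 1) * (max e 0) ^ (q - 2) * (y - e))
      (f' := fun y : ℝ => q * (q - 1) * (max y 0) ^ (q - 2)
        - q * (q - 1) * (max e 0) ^ (q - 2))
      (s := S) (C := K * |f|)
      (fun y _ => by
        have d := ((((D2 y).const_mul q).sub_const (q * (max e 0) ^ (q - 1))).sub
            (((hasDerivAt_id y).sub_const e).const_mul
              (q * (q - 1) * (max e 0) ^ (q - 2))))
        exact (d.congr_deriv (by ring)).hasDerivWithinAt)
      (fun y hy => by rw [Real.norm_eq_abs]; exact step1 y hy)
      hS heS hx
    rw [Real.norm_eq_abs, Real.norm_eq_abs] at mvt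
    simp only [sub_self, mul_zero, sub_zero] at mvt
    exact mvt.trans (mul_le_mul_of_nonneg_left (hdist x hx) (by positivity))
  -- Step 3
  have step3 :
      |((max (e + f) 0) ^ q - (max e 0) ^ q - q * (max e 0) ^ (q - 1) * ((e + f) - e)
        - q * (q - 1) * (max e 0) ^ (q - 2) / 2 * ((e + f) - e) ^ 2)|
        ≤ K * |f| * |f| * |f| := by
    have mvt := Convex.norm_image_sub_le_of_norm_hasDerivWithin_le
      (f := fun y : ℝ => (max y 0) ^ q - (max e 0) ^ q - q * (max e 0) ^ (q - 1) * (y - e)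
        - q * (q - 1) * (max e 0) ^ (q - 2) / 2 * (y - e) ^ 2)
      (f' := fun y : ℝ => q * (max y 0) ^ (q - 1) - q * (max e 0) ^ (q - 1)
        - q * (q - 1) * (max e 0) ^ (q - 2) * (y - e))
      (s := S) (C := K * |f| * |f|)
      (fun y _ => by
        have d := ((((D1 y).sub_const ((max e 0) ^ q)).sub
            (((hasDerivAt_id y).sub_const e).const_mul (q * (max e 0) ^ (q - 1)))).sub
            ((((hasDerivAt_id y).sub_const e).pow 2).const_mul
              (q * (q - 1) * (max e 0) ^ (q - 2) / 2)))
        exact (d.congr_deriv (by simp only [id_eq]; push_cast; ring)).hasDerivWithinAt)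
      (fun y hy => by rw [Real.norm_eq_abs]; exact step2 y hy)
      hS heS hfS
    rw [Real.norm_eq_abs, Real.norm_eq_abs] at mvt
    simp only [sub_self, mul_zero, sub_zero, zero_pow, ne_eq, OfNat.ofNat_ne_zero,
      not_false_eq_true] at mvt
    have : |e + f - e| = |f| := by ring_nf
    calc |((max (e + f) 0) ^ q - (max e 0) ^ q - q * (max e 0) ^ (q - 1) * ((e + f) - e)
        - q * (q - 1) * (max e 0) ^ (q - 2) / 2 * ((e + f) - e) ^ 2)| ≤ K * |f| * |f| * |e + f - e| := mvt
      _ = K * |f| * |f| * |f| := by rw [this]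
  -- conclude
  have hKC : K ≤ q * (q - 1) * (q - 2) * 2 ^ (q - 3) * (|e| ^ (q - 3) + |f| ^ (q - 3)) := by
    have hmax : A ≤ 2 * max |e| |f| := by
      rw [hAdef]
      rcases le_total |e| |f| with h | h
      · rw [max_eq_right h]; linarith
      · rw [max_eq_left h]; linarith
    have h1' : A ^ (q - 3) ≤ (2 * max |e| |f|) ^ (q - 3) :=
      Real.rpow_le_rpow hA0 hmax h3.le
    have h2' : (2 * max |e| |f|) ^ (q - 3)
        = 2 ^ (q - 3) * (max |e| |f|) ^ (q - 3) :=
      Real.mul_rpow (by norm_num) (le_max_of_le_left (abs_nonneg e))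
    have h3' : (max |e| |f|) ^ (q - 3) ≤ |e| ^ (q - 3) + |f| ^ (q - 3) := by
      rcases max_cases |e| |f| with ⟨hm, _⟩ | ⟨hm, _⟩ <;> rw [hm]
      · have : (0:ℝ) ≤ |f| ^ (q - 3) := Real.rpow_nonneg (abs_nonneg f) _
        linarith
      · have : (0:ℝ) ≤ |e| ^ (q - 3) := Real.rpow_nonneg (abs_nonneg e) _
        linarith
    calc K = q * (q - 1) * (q - 2) * A ^ (q - 3) := hKdef
      _ ≤ q * (q - 1) * (q - 2) * (2 ^ (q - 3) * (max |e| |f|) ^ (q - 3)) := by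
          rw [← h2']
          exact mul_le_mul_of_nonneg_left h1' (by positivity)
      _ ≤ q * (q - 1) * (q - 2) * (2 ^ (q - 3) * (|e| ^ (q - 3) + |f| ^ (q - 3))) := by
          apply mul_le_mul_of_nonneg_left _ (by positivity)
          exact mul_le_mul_of_nonneg_left h3' h2pow.le
      _ = q * (q - 1) * (q - 2) * 2 ^ (q - 3) * (|e| ^ (q - 3) + |f| ^ (q - 3)) := by ring
  have hfin : K * |f| * |f| * |f|
      ≤ q * (q - 1) * (q - 2) * 2 ^ (q - 3) * (|e| ^ (q - 3) + |f| ^ (q - 3)) * |f| ^ 3 := by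
    have : K * |f| * |f| * |f| = K * |f| ^ 3 := by ring
    rw [this]
    have h3nn : (0:ℝ) ≤ |f| ^ 3 := by positivity
    exact mul_le_mul_of_nonneg_right hKC h3nn
  have heq : (max (e + f) 0) ^ q - (max e 0) ^ q - q * (max e 0) ^ (q - 1) * f
          - q * (q - 1) / 2 * (max e 0) ^ (q - 2) * f ^ 2
      = (max (e + f) 0) ^ q - (max e 0) ^ q - q * (max e 0) ^ (q - 1) * ((e + f) - e)
        - q * (q - 1) * (max e 0) ^ (q - 2) / 2 * ((e + f) - e) ^ 2 := by ring
  rw [heq]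
  exact step3.trans hfin

end
end

section
/- Let Q : ℝ³ → ℝ be smooth and bounded and let N be a positive integer. Then for every δ > 0 there exists C > 0 such that for every sufficiently small ε > 0 and every y in the closed ball of radius δ about 0: | ∫_{ℝ³}(Q(x) − Q(0))·w((x−y)/ε)^q dx − (Q(y) − Q(0))·ε³∫_{ℝ³}w^q | ≤ C( Σ_{m=1}^{N} ε^{3+m}|D^m Q(y)| + ε^{4+N} ). -/
open MeasureTheory Real Filter
open scoped Nat

noncomputable section

/-! ### Auxiliary lemmas -/

lemma st19_exp_bound (c : ℝ) (hc : 0 < c) (k : ℕ) (s : ℝ) (hs : 0 ≤ s) :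
    s ^ k * Real.exp (-(c * s)) ≤ (k ! : ℝ) / c ^ k := by
  have hfac : (0:ℝ) < (k ! : ℝ) := by positivity
  have h : (c * s) ^ k / (k ! : ℝ) ≤ Real.exp (c * s) :=
    Real.pow_div_factorial_le_exp (c * s) (mul_nonneg hc.le hs) k
  have h3 : c ^ k * s ^ k ≤ (k ! : ℝ) * Real.exp (c * s) := by
    rw [div_le_iff₀ hfac] at h
    calc c ^ k * s ^ k = (c * s) ^ k := (mul_pow c s k).symm
      _ ≤ Real.exp (c * s) * (k ! : ℝ) := h
      _ = (k ! : ℝ) * Real.exp (c * s) := mul_comm _ _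
  have hck : (0:ℝ) < c ^ k := pow_pos hc k
  rw [le_div_iff₀ hck]
  have hexp : (0:ℝ) ≤ Real.exp (-(c * s)) := (Real.exp_pos _).le
  calc s ^ k * Real.exp (-(c * s)) * c ^ k
      = (c ^ k * s ^ k) * Real.exp (-(c * s)) := by ring
    _ ≤ ((k ! : ℝ) * Real.exp (c * s)) * Real.exp (-(c * s)) :=
        mul_le_mul_of_nonneg_right h3 hexp
    _ = (k ! : ℝ) := by
        rw [mul_assoc, ← Real.exp_add]
        simp

/-- Integrability of `‖z‖ ^ k * w z ^ q` under the decay hypotheses. -/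
lemma st19_int (q η C₀ : ℝ) (hq1 : 2 < q) (hη : 0 < η) (hC₀ : 0 < C₀) (w : E3 → ℝ)
    (hwpos : ∀ x, 0 < w x) (hwcont : Continuous w)
    (hwint : ∀ q' : ℝ, 0 < q' → Integrable fun x : E3 => (w x) ^ q')
    (hwdecay : ∀ x, w x ≤ C₀ * (1 + ‖x‖)⁻¹ * Real.exp (-η * ‖x‖)) (k : ℕ) :
    Integrable (fun z : E3 => ‖z‖ ^ k * w z ^ q) := by
  have hq0 : (0:ℝ) < q := by linarith
  have hq2 : (0:ℝ) < q / 2 := by linarith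
  set c : ℝ := η * (q / 2) with hc
  have hcpos : 0 < c := by positivity
  set K : ℝ := C₀ ^ (q / 2) * ((k ! : ℝ) / c ^ k) with hK
  have key : ∀ z : E3, ‖z‖ ^ k * w z ^ (q / 2) ≤ K := by
    intro z
    have h1 : w z ^ (q / 2) ≤ (C₀ * Real.exp (-η * ‖z‖)) ^ (q / 2) := by
      apply Real.rpow_le_rpow (hwpos z).le ?_ hq2.le
      calc w z ≤ C₀ * (1 + ‖z‖)⁻¹ * Real.exp (-η * ‖z‖) := hwdecay z
        _ ≤ C₀ * 1 * Real.exp (-η * ‖z‖) := by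
            have h11 : (1 + ‖z‖)⁻¹ ≤ 1 := by
              rw [inv_le_one_iff₀]
              right; linarith [norm_nonneg z]
            gcongr
        _ = C₀ * Real.exp (-η * ‖z‖) := by ring
    have h2 : (C₀ * Real.exp (-η * ‖z‖)) ^ (q / 2)
        = C₀ ^ (q / 2) * Real.exp (-(c * ‖z‖)) := by
      rw [Real.mul_rpow hC₀.le (Real.exp_pos _).le, ← Real.exp_mul]
      congr 2
      rw [hc]; ring
    have h3 : ‖z‖ ^ k * Real.exp (-(c * ‖z‖)) ≤ (k ! : ℝ) / c ^ k :=
      st19_exp_bound c hcpos k ‖z‖ (norm_nonneg z)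
    calc ‖z‖ ^ k * w z ^ (q / 2)
        ≤ ‖z‖ ^ k * (C₀ ^ (q / 2) * Real.exp (-(c * ‖z‖))) := by
          rw [← h2]
          exact mul_le_mul_of_nonneg_left h1 (by positivity)
      _ = C₀ ^ (q / 2) * (‖z‖ ^ k * Real.exp (-(c * ‖z‖))) := by ring
      _ ≤ C₀ ^ (q / 2) * ((k ! : ℝ) / c ^ k) :=
          mul_le_mul_of_nonneg_left h3 (by positivity)
  have hmeas : AEStronglyMeasurable (fun z : E3 => ‖z‖ ^ k * w z ^ q) volume := by
    apply Continuous.aestronglyMeasurable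
    exact (continuous_norm.pow k).mul (hwcont.rpow_const fun x => Or.inr hq0.le)
  refine Integrable.mono' (((hwint (q / 2) hq2).const_mul K)) hmeas ?_
  refine Filter.Eventually.of_forall fun z => ?_
  have hq2' : q / 2 + q / 2 = q := by ring
  have hsplit : w z ^ q = w z ^ (q / 2) * w z ^ (q / 2) := by
    rw [← Real.rpow_add (hwpos z), hq2']
  have hwz : (0:ℝ) ≤ w z ^ (q / 2) := Real.rpow_nonneg (hwpos z).le _
  have hnn : (0:ℝ) ≤ ‖z‖ ^ k * w z ^ q := by
    have := Real.rpow_nonneg (hwpos z).le q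
    positivity
  rw [Real.norm_eq_abs, abs_of_nonneg hnn, hsplit]
  calc ‖z‖ ^ k * (w z ^ (q / 2) * w z ^ (q / 2))
      = (‖z‖ ^ k * w z ^ (q / 2)) * w z ^ (q / 2) := by ring
    _ ≤ K * w z ^ (q / 2) := mul_le_mul_of_nonneg_right (key z) hwz

/-- Iterated derivative of a smooth function along a line. -/
lemma st19_line (Q : E3 → ℝ) (hQs : ∀ n : ℕ, ContDiff ℝ (n : ℕ∞) Q) (y v : E3) :
    ∀ (m : ℕ) (t : ℝ), iteratedDeriv m (fun s : ℝ => Q (y + s • v)) t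
      = iteratedFDeriv ℝ m Q (y + t • v) (fun _ => v) := by
  intro m
  induction m with
  | zero =>
      intro t
      simp [iteratedDeriv_zero, iteratedFDeriv_zero_apply]
  | succ m ih =>
      intro t
      rw [iteratedDeriv_succ]
      have hrw : iteratedDeriv m (fun s : ℝ => Q (y + s • v))
          = fun s : ℝ => iteratedFDeriv ℝ m Q (y + s • v) (fun _ => v) := funext fun s => ih s
      rw [hrw]
      have hline : HasDerivAt (fun s : ℝ => y + s • v) v t := by
        simpa using ((hasDerivAt_id t).smul_const v).const_add y
      have hdiff : DifferentiableAt ℝ (iteratedFDeriv ℝ m Q) (y + t • v) :=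
        ((hQs (m + 1)).differentiable_iteratedFDeriv
          (by exact_mod_cast Nat.lt_succ_self m)) _
      have h1 : HasDerivAt (fun s : ℝ => iteratedFDeriv ℝ m Q (y + s • v))
          (fderiv ℝ (iteratedFDeriv ℝ m Q) (y + t • v) v) t :=
        hdiff.hasFDerivAt.comp_hasDerivAt t hline
      have h2 := ((ContinuousMultilinearMap.apply ℝ (fun _ : Fin m => E3) ℝ
          (fun _ => v)).hasFDerivAt).comp_hasDerivAt t h1
      have h3 : HasDerivAt (fun s : ℝ => iteratedFDeriv ℝ m Q (y + s • v) (fun _ => v))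
          ((fderiv ℝ (iteratedFDeriv ℝ m Q) (y + t • v) v) (fun _ => v)) t := h2
      rw [h3.deriv, iteratedFDeriv_succ_apply_left]
      rfl

/-- Multivariate Taylor estimate along the segment `[y, y + v]`. -/
lemma st19_taylor (Q : E3 → ℝ) (hQs : ∀ n : ℕ, ContDiff ℝ (n : ℕ∞) Q) (n : ℕ) (y v : E3)
    (B : ℝ) (hB : ∀ t ∈ Set.Icc (0:ℝ) 1, ‖iteratedFDeriv ℝ (n + 1) Q (y + t • v)‖ ≤ B) :
    |Q (y + v) - ∑ m ∈ Finset.range (n + 1),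
        ((m ! : ℝ))⁻¹ * iteratedFDeriv ℝ m Q y (fun _ => v)|
      ≤ B * ‖v‖ ^ (n + 1) / (n ! : ℝ) := by
  set g : ℝ → ℝ := fun t => Q (y + t • v) with hg
  have hlineC : ContDiff ℝ ((n + 1 : ℕ) : ℕ∞) (fun t : ℝ => y + t • v) :=
    contDiff_const.add (contDiff_id.smul contDiff_const)
  have hgC : ContDiff ℝ ((n + 1 : ℕ) : ℕ∞) g := (hQs (n + 1)).comp hlineC
  have huniq : UniqueDiffOn ℝ (Set.Icc (0:ℝ) 1) := uniqueDiffOn_Icc zero_lt_one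
  have hgd : ∀ (k : ℕ) (t : ℝ), iteratedDeriv k g t
      = iteratedFDeriv ℝ k Q (y + t • v) (fun _ => v) := st19_line Q hQs y v
  have hW : ∀ k : ℕ, k ≤ n + 1 → ∀ t ∈ Set.Icc (0:ℝ) 1,
      iteratedDerivWithin k g (Set.Icc (0:ℝ) 1) t = iteratedDeriv k g t := by
    intro k hk t ht
    have hser := (contDiff_iff_ftaylorSeries.mp hgC).hasFTaylorSeriesUpToOn (Set.Icc (0:ℝ) 1)
    have := hser.eq_iteratedFDerivWithin_of_uniqueDiffOn (m := k)
      (by exact_mod_cast hk) huniq ht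
    rw [iteratedDerivWithin_eq_iteratedFDerivWithin, iteratedDeriv_eq_iteratedFDeriv, ← this]
    rfl
  have hCbd : ∀ t ∈ Set.Icc (0:ℝ) 1,
      ‖iteratedDerivWithin (n + 1) g (Set.Icc (0:ℝ) 1) t‖ ≤ B * ‖v‖ ^ (n + 1) := by
    intro t ht
    rw [hW (n + 1) le_rfl t ht, hgd (n + 1) t]
    have h1 := (iteratedFDeriv ℝ (n + 1) Q (y + t • v)).le_opNorm (fun _ => v)
    have h2 : (∏ _i : Fin (n + 1), ‖v‖) = ‖v‖ ^ (n + 1) := by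
      simp [Finset.prod_const]
    rw [h2] at h1
    calc ‖iteratedFDeriv ℝ (n + 1) Q (y + t • v) (fun _ => v)‖
        ≤ ‖iteratedFDeriv ℝ (n + 1) Q (y + t • v)‖ * ‖v‖ ^ (n + 1) := h1
      _ ≤ B * ‖v‖ ^ (n + 1) :=
          mul_le_mul_of_nonneg_right (hB t ht) (by positivity)
  have hmain := taylor_mean_remainder_bound (f := g) (a := 0) (b := 1) (x := 1) (n := n)
    zero_le_one (hgC.contDiffOn) (Set.right_mem_Icc.mpr zero_le_one) hCbd
  rw [taylor_within_apply] at hmain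
  have hsum : ∑ k ∈ Finset.range (n + 1),
      (((k ! : ℝ))⁻¹ * (1 - 0 : ℝ) ^ k) • iteratedDerivWithin k g (Set.Icc (0:ℝ) 1) 0
      = ∑ m ∈ Finset.range (n + 1), ((m ! : ℝ))⁻¹ * iteratedFDeriv ℝ m Q y (fun _ => v) := by
    apply Finset.sum_congr rfl
    intro k hk
    rw [Finset.mem_range] at hk
    have h0 : (0:ℝ) ∈ Set.Icc (0:ℝ) 1 := Set.left_mem_Icc.mpr zero_le_one
    rw [hW k (by omega) 0 h0, hgd k 0]
    simp [smul_eq_mul]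
  rw [hsum] at hmain
  have hg1 : g 1 = Q (y + v) := by simp [hg]
  rw [hg1] at hmain
  have : (1 - 0 : ℝ) ^ (n + 1) = 1 := by norm_num
  rw [this] at hmain
  calc |Q (y + v) - ∑ m ∈ Finset.range (n + 1),
        ((m ! : ℝ))⁻¹ * iteratedFDeriv ℝ m Q y (fun _ => v)|
      = ‖Q (y + v) - ∑ m ∈ Finset.range (n + 1),
        ((m ! : ℝ))⁻¹ * iteratedFDeriv ℝ m Q y (fun _ => v)‖ := (Real.norm_eq_abs _).symm
    _ ≤ B * ‖v‖ ^ (n + 1) * 1 / (n ! : ℝ) := hmain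
    _ = B * ‖v‖ ^ (n + 1) / (n ! : ℝ) := by ring

theorem statement19 (q η C₀ : ℝ) (hq1 : 2 < q) (hq2 : q < 6) (hη : 0 < η) (hC₀ : 0 < C₀)
    (w : E3 → ℝ) (hwpos : ∀ x, 0 < w x) (hwcont : Continuous w)
    (hwrad : ∀ x y : E3, ‖x‖ = ‖y‖ → w x = w y)
    (hwint : ∀ q' : ℝ, 0 < q' → Integrable fun x : E3 => (w x) ^ q')
    (hwdecay : ∀ x, w x ≤ C₀ * (1 + ‖x‖)⁻¹ * Real.exp (-η * ‖x‖))
    (Q : E3 → ℝ) (hQs : ∀ n : ℕ, ContDiff ℝ n Q) (hQb : ∃ M, ∀ x, |Q x| ≤ M)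
    (N : ℕ) (hN : 0 < N) :
    ∀ δ > (0 : ℝ), ∃ C > 0, ∃ ε₀ > 0, ∀ ε ∈ Set.Ioc (0 : ℝ) ε₀, ∀ y : E3, ‖y‖ ≤ δ →
      |(∫ x : E3, (Q x - Q 0) * (w (ε⁻¹ • (x - y))) ^ q)
          - (Q y - Q 0) * ε ^ 3 * ∫ x : E3, (w x) ^ q|
        ≤ C * ((∑ m ∈ Finset.Icc 1 N, ε ^ (3 + m) * ‖iteratedFDeriv ℝ m Q y‖)
            + ε ^ (4 + N)) := by
  intro δ hδ
  have hq0 : (0:ℝ) < q := by linarith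
  obtain ⟨M, hM⟩ := hQb
  have hM0 : 0 ≤ M := le_trans (abs_nonneg _) (hM 0)
  obtain ⟨B, hB⟩ : ∃ B, ∀ x ∈ Metric.closedBall (0:E3) (δ + 1),
      ‖iteratedFDeriv ℝ (N + 1) Q x‖ ≤ B := by
    have hcont : Continuous (iteratedFDeriv ℝ (N + 1) Q) :=
      ContDiff.continuous_iteratedFDeriv (n := ((N + 2 : ℕ) : ℕ∞))
        (by exact_mod_cast Nat.le_succ (N + 1)) (hQs (N + 2))
    exact (isCompact_closedBall (0:E3) (δ + 1)).exists_bound_of_continuousOn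
      hcont.continuousOn
  have hB0 : 0 ≤ B := le_trans (norm_nonneg _) (hB 0 (by
    simp only [Metric.mem_closedBall, dist_self]; linarith))
  have hwq0 : ∀ z : E3, 0 ≤ w z ^ q := fun z => Real.rpow_nonneg (hwpos z).le q
  have hint : ∀ k : ℕ, Integrable (fun z : E3 => ‖z‖ ^ k * w z ^ q) := fun k =>
    st19_int q η C₀ hq1 hη hC₀ w hwpos hwcont hwint hwdecay k
  set I : ℕ → ℝ := fun k => ∫ z : E3, ‖z‖ ^ k * w z ^ q with hIdef
  have hI0 : ∀ k, 0 ≤ I k := fun k => integral_nonneg fun z => by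
    have := hwq0 z; positivity
  set Cr : ℝ := B / N ! + 2 * M with hCrdef
  have hCr0 : 0 ≤ Cr := by positivity
  set C : ℝ := (∑ m ∈ Finset.Icc 1 N, I m / m !) + Cr * I (N + 1) + 1 with hCdef
  have hsum0 : 0 ≤ ∑ m ∈ Finset.Icc 1 N, I m / m ! :=
    Finset.sum_nonneg fun m _ => by have := hI0 m; positivity
  have hCrI : 0 ≤ Cr * I (N + 1) := mul_nonneg hCr0 (hI0 (N + 1))
  have hC0 : 0 < C := by rw [hCdef]; linarith
  have hC1 : ∀ m ∈ Finset.Icc 1 N, I m / m ! ≤ C := by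
    intro m hm
    have h := Finset.single_le_sum (f := fun m : ℕ => I m / m !)
      (fun i _ => by have := hI0 i; positivity) hm
    rw [hCdef]; linarith
  have hC2 : Cr * I (N + 1) ≤ C := by rw [hCdef]; linarith
  refine ⟨C, hC0, 1, one_pos, ?_⟩
  rintro ε ⟨hε0, hε1⟩ y hy
  have hQcont : Continuous Q := (hQs 0).continuous
  have hlinec : Continuous fun z : E3 => y + ε • z :=
    continuous_const.add (continuous_id.const_smul ε)
  -- change of variables
  have hA : (∫ x : E3, (Q x - Q 0) * (w (ε⁻¹ • (x - y))) ^ q)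
      = ε ^ 3 * ∫ z : E3, (Q (y + ε • z) - Q 0) * w z ^ q := by
    have e1 : (fun x : E3 => (Q x - Q 0) * (w (ε⁻¹ • (x - y))) ^ q)
        = fun x : E3 => (fun u : E3 => (Q (y + u) - Q 0) * (w (ε⁻¹ • u)) ^ q) (x - y) := by
      funext x
      have hxy : y + (x - y) = x := by abel
      simp only [hxy]
    rw [e1, integral_sub_right_eq_self
      (fun u : E3 => (Q (y + u) - Q 0) * (w (ε⁻¹ • u)) ^ q) y]
    have e2 : (fun u : E3 => (Q (y + u) - Q 0) * (w (ε⁻¹ • u)) ^ q)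
        = fun u : E3 => (fun z : E3 => (Q (y + ε • z) - Q 0) * w z ^ q) (ε⁻¹ • u) := by
      funext u
      simp only [smul_inv_smul₀ (ne_of_gt hε0)]
    rw [e2, Measure.integral_comp_inv_smul_of_nonneg volume
      (fun z : E3 => (Q (y + ε • z) - Q 0) * w z ^ q) hε0.le]
    rw [finrank_euclideanSpace_fin, smul_eq_mul]
  have hbdd1 : ∀ c : ℝ, ∃ Cb : ℝ, ∀ z : E3, ‖Q (y + ε • z) - c‖ ≤ M + |c| := by
    intro c
    exact ⟨M + |c|, fun z => by
      rw [Real.norm_eq_abs]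
      calc |Q (y + ε • z) - c| ≤ |Q (y + ε • z)| + |c| := abs_sub _ _
        _ ≤ M + |c| := by have := hM (y + ε • z); linarith⟩
  have hint1 : Integrable (fun z : E3 => (Q (y + ε • z) - Q 0) * w z ^ q) :=
    Integrable.bdd_mul (c := M + |Q 0|) (hwint q hq0)
      ((hQcont.comp hlinec).sub continuous_const).aestronglyMeasurable
      (Filter.Eventually.of_forall fun z => (hbdd1 (Q 0)).choose_spec z)
  have hint2 : Integrable (fun z : E3 => (Q y - Q 0) * w z ^ q) :=
    (hwint q hq0).const_mul _
  have hD : (∫ x : E3, (Q x - Q 0) * (w (ε⁻¹ • (x - y))) ^ q)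
      - (Q y - Q 0) * ε ^ 3 * ∫ x : E3, (w x) ^ q
      = ε ^ 3 * ∫ z : E3, (Q (y + ε • z) - Q y) * w z ^ q := by
    rw [hA]
    have e3 : (Q y - Q 0) * ε ^ 3 * ∫ x : E3, (w x) ^ q
        = ε ^ 3 * ∫ z : E3, (Q y - Q 0) * w z ^ q := by
      rw [integral_const_mul]; ring
    rw [e3, ← mul_sub, ← integral_sub hint1 hint2]
    congr 1
    exact integral_congr_ae (Filter.Eventually.of_forall fun z => by ring)
  -- pointwise Taylor bound
  have hpt : ∀ z : E3, |Q (y + ε • z) - Q y|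
      ≤ (∑ m ∈ Finset.Icc 1 N, ε ^ m * ‖iteratedFDeriv ℝ m Q y‖ / m ! * ‖z‖ ^ m)
        + Cr * ε ^ (N + 1) * ‖z‖ ^ (N + 1) := by
    intro z
    have hnormv : ‖ε • z‖ = ε * ‖z‖ := by
      rw [norm_smul, Real.norm_eq_abs, abs_of_pos hε0]
    have hsumnn : 0 ≤ ∑ m ∈ Finset.Icc 1 N,
        ε ^ m * ‖iteratedFDeriv ℝ m Q y‖ / m ! * ‖z‖ ^ m :=
      Finset.sum_nonneg fun m _ => by positivity
    by_cases hcase : ε * ‖z‖ ≤ 1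
    · -- Taylor regime
      have hseg : ∀ t ∈ Set.Icc (0:ℝ) 1,
          ‖iteratedFDeriv ℝ (N + 1) Q (y + t • (ε • z))‖ ≤ B := by
        intro t ht
        apply hB
        rw [Metric.mem_closedBall, dist_zero_right]
        calc ‖y + t • (ε • z)‖ ≤ ‖y‖ + ‖t • (ε • z)‖ := norm_add_le _ _
          _ ≤ δ + 1 := by
              have e4 : ‖t • (ε • z)‖ = t * (ε * ‖z‖) := by
                rw [norm_smul, Real.norm_eq_abs, abs_of_nonneg ht.1, hnormv]
              rw [e4]
              have h1 : t * (ε * ‖z‖) ≤ 1 * 1 :=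
                mul_le_mul ht.2 hcase (by positivity) zero_le_one
              linarith
      have htay := st19_taylor Q (fun n => hQs n) N y (ε • z) B hseg
      have hrange : Finset.range (N + 1) = insert 0 (Finset.Icc 1 N) := by
        ext i
        simp only [Finset.mem_range, Finset.mem_insert, Finset.mem_Icc]
        omega
      have h0notin : (0:ℕ) ∉ Finset.Icc 1 N := by simp
      have hsplit : ∑ m ∈ Finset.range (N + 1),
          ((m ! : ℝ))⁻¹ * iteratedFDeriv ℝ m Q y (fun _ => ε • z)
          = Q y + ∑ m ∈ Finset.Icc 1 N,
              ((m ! : ℝ))⁻¹ * iteratedFDeriv ℝ m Q y (fun _ => ε • z) := by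
        rw [hrange, Finset.sum_insert h0notin]
        congr 1
        simp [iteratedFDeriv_zero_apply]
      rw [hsplit] at htay
      set S : ℝ := ∑ m ∈ Finset.Icc 1 N,
        ((m ! : ℝ))⁻¹ * iteratedFDeriv ℝ m Q y (fun _ => ε • z) with hSdef
      have hSbound : |S| ≤ ∑ m ∈ Finset.Icc 1 N,
          ε ^ m * ‖iteratedFDeriv ℝ m Q y‖ / m ! * ‖z‖ ^ m := by
        rw [hSdef]
        refine (Finset.abs_sum_le_sum_abs _ _).trans (Finset.sum_le_sum ?_)
        intro m hm
        rw [abs_mul, abs_of_nonneg (by positivity : (0:ℝ) ≤ ((m ! : ℝ))⁻¹)]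
        have h2 : |iteratedFDeriv ℝ m Q y (fun _ => ε • z)|
            ≤ ‖iteratedFDeriv ℝ m Q y‖ * ‖ε • z‖ ^ m := by
          have h3 := (iteratedFDeriv ℝ m Q y).le_opNorm (fun _ => ε • z)
          have h4 : (∏ _i : Fin m, ‖ε • z‖) = ‖ε • z‖ ^ m := by
            simp [Finset.prod_const]
          rw [h4] at h3
          simpa [Real.norm_eq_abs] using h3
        calc ((m ! : ℝ))⁻¹ * |iteratedFDeriv ℝ m Q y (fun _ => ε • z)|
            ≤ ((m ! : ℝ))⁻¹ * (‖iteratedFDeriv ℝ m Q y‖ * ‖ε • z‖ ^ m) :=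
              mul_le_mul_of_nonneg_left h2 (by positivity)
          _ = ε ^ m * ‖iteratedFDeriv ℝ m Q y‖ / m ! * ‖z‖ ^ m := by
              rw [hnormv, mul_pow]; ring
      have hrem : B * ‖ε • z‖ ^ (N + 1) / (N ! : ℝ)
          ≤ Cr * ε ^ (N + 1) * ‖z‖ ^ (N + 1) := by
        have hle : B / (N ! : ℝ) ≤ Cr := by rw [hCrdef]; linarith
        rw [hnormv, mul_pow]
        calc B * (ε ^ (N + 1) * ‖z‖ ^ (N + 1)) / (N ! : ℝ)
            = B / (N ! : ℝ) * (ε ^ (N + 1) * ‖z‖ ^ (N + 1)) := by ring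
          _ ≤ Cr * (ε ^ (N + 1) * ‖z‖ ^ (N + 1)) :=
              mul_le_mul_of_nonneg_right hle (by positivity)
          _ = Cr * ε ^ (N + 1) * ‖z‖ ^ (N + 1) := by ring
      calc |Q (y + ε • z) - Q y|
          = |(Q (y + ε • z) - (Q y + S)) + S| := by congr 1; ring
        _ ≤ |Q (y + ε • z) - (Q y + S)| + |S| := abs_add_le _ _
        _ ≤ B * ‖ε • z‖ ^ (N + 1) / (N ! : ℝ) + ∑ m ∈ Finset.Icc 1 N,
              ε ^ m * ‖iteratedFDeriv ℝ m Q y‖ / m ! * ‖z‖ ^ m :=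
            add_le_add htay hSbound
        _ ≤ (∑ m ∈ Finset.Icc 1 N, ε ^ m * ‖iteratedFDeriv ℝ m Q y‖ / m ! * ‖z‖ ^ m)
              + Cr * ε ^ (N + 1) * ‖z‖ ^ (N + 1) := by linarith [hrem]
    · -- far regime
      push_neg at hcase
      have h1 : |Q (y + ε • z) - Q y| ≤ 2 * M := by
        calc |Q (y + ε • z) - Q y| ≤ |Q (y + ε • z)| + |Q y| := abs_sub _ _
          _ ≤ 2 * M := by have := hM (y + ε • z); have := hM y; linarith
      have h2 : (1:ℝ) ≤ (ε * ‖z‖) ^ (N + 1) := by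
        calc (1:ℝ) = 1 ^ (N + 1) := by norm_num
          _ ≤ (ε * ‖z‖) ^ (N + 1) := pow_le_pow_left₀ zero_le_one hcase.le _
      have h3 : 2 * M ≤ Cr := by
        rw [hCrdef]
        have : (0:ℝ) ≤ B / (N ! : ℝ) := by positivity
        linarith
      calc |Q (y + ε • z) - Q y| ≤ 2 * M := h1
        _ ≤ 2 * M * (ε * ‖z‖) ^ (N + 1) := le_mul_of_one_le_right (by linarith) h2
        _ ≤ Cr * (ε * ‖z‖) ^ (N + 1) :=
            mul_le_mul_of_nonneg_right h3 (by positivity)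
        _ = Cr * ε ^ (N + 1) * ‖z‖ ^ (N + 1) := by rw [mul_pow]; ring
        _ ≤ (∑ m ∈ Finset.Icc 1 N, ε ^ m * ‖iteratedFDeriv ℝ m Q y‖ / m ! * ‖z‖ ^ m)
              + Cr * ε ^ (N + 1) * ‖z‖ ^ (N + 1) := le_add_of_nonneg_left hsumnn
  -- integral estimate
  have hintL : Integrable (fun z : E3 => |Q (y + ε • z) - Q y| * w z ^ q) :=
    Integrable.bdd_mul (c := 2 * M) (hwint q hq0)
      (((hQcont.comp hlinec).sub continuous_const).abs.aestronglyMeasurable)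
      (Filter.Eventually.of_forall fun z => by
        rw [Real.norm_eq_abs, abs_abs]
        calc |Q (y + ε • z) - Q y| ≤ |Q (y + ε • z)| + |Q y| := abs_sub _ _
          _ ≤ 2 * M := by have := hM (y + ε • z); have := hM y; linarith)
  have hGint : Integrable (fun z : E3 =>
      (∑ m ∈ Finset.Icc 1 N, ε ^ m * ‖iteratedFDeriv ℝ m Q y‖ / m ! *
        (‖z‖ ^ m * w z ^ q))
      + Cr * ε ^ (N + 1) * (‖z‖ ^ (N + 1) * w z ^ q)) := by
    refine Integrable.add ?_ (((hint (N + 1)).const_mul _))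
    exact integrable_finset_sum _ fun m _ => (hint m).const_mul _
  have key : |∫ z : E3, (Q (y + ε • z) - Q y) * w z ^ q|
      ≤ (∑ m ∈ Finset.Icc 1 N, ε ^ m * ‖iteratedFDeriv ℝ m Q y‖ / m ! * I m)
        + Cr * ε ^ (N + 1) * I (N + 1) := by
    have habs : |∫ z : E3, (Q (y + ε • z) - Q y) * w z ^ q|
        ≤ ∫ z : E3, |Q (y + ε • z) - Q y| * w z ^ q := by
      have h5 := norm_integral_le_integral_norm (μ := volume) (fun z : E3 => (Q (y + ε • z) - Q y) * w z ^ q)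
      rw [Real.norm_eq_abs] at h5
      refine h5.trans (le_of_eq ?_)
      refine integral_congr_ae (Filter.Eventually.of_forall fun z => ?_)
      show ‖(Q (y + ε • z) - Q y) * w z ^ q‖ = |Q (y + ε • z) - Q y| * w z ^ q
      rw [Real.norm_eq_abs, abs_mul, abs_of_nonneg (hwq0 z)]
    refine habs.trans ?_
    have hmono : (∫ z : E3, |Q (y + ε • z) - Q y| * w z ^ q)
        ≤ ∫ z : E3, ((∑ m ∈ Finset.Icc 1 N, ε ^ m * ‖iteratedFDeriv ℝ m Q y‖ / m ! *
            (‖z‖ ^ m * w z ^ q))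
          + Cr * ε ^ (N + 1) * (‖z‖ ^ (N + 1) * w z ^ q)) := by
      refine integral_mono hintL hGint ?_
      intro z
      have h6 := mul_le_mul_of_nonneg_right (hpt z) (hwq0 z)
      calc |Q (y + ε • z) - Q y| * w z ^ q
          ≤ ((∑ m ∈ Finset.Icc 1 N, ε ^ m * ‖iteratedFDeriv ℝ m Q y‖ / m ! * ‖z‖ ^ m)
              + Cr * ε ^ (N + 1) * ‖z‖ ^ (N + 1)) * w z ^ q := h6
        _ = (∑ m ∈ Finset.Icc 1 N, ε ^ m * ‖iteratedFDeriv ℝ m Q y‖ / m ! *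
              (‖z‖ ^ m * w z ^ q))
            + Cr * ε ^ (N + 1) * (‖z‖ ^ (N + 1) * w z ^ q) := by
            rw [add_mul, Finset.sum_mul]
            congr 1
            · exact Finset.sum_congr rfl fun m _ => by ring
            · ring
    refine hmono.trans (le_of_eq ?_)
    rw [integral_add (integrable_finset_sum _ fun m _ => (hint m).const_mul _)
      (((hint (N + 1)).const_mul _)), integral_finset_sum _ fun m _ => (hint m).const_mul _]
    congr 1
    · exact Finset.sum_congr rfl fun m _ => integral_const_mul _ _
    · exact integral_const_mul _ _
  -- final assembly
  rw [hD, abs_mul, abs_of_pos (pow_pos hε0 3)]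
  have hstep := mul_le_mul_of_nonneg_left key (le_of_lt (pow_pos hε0 3))
  refine hstep.trans ?_
  have hp : ε ^ (4 + N) = ε ^ 3 * ε ^ (N + 1) := by
    rw [← pow_add]; congr 1; omega
  have e7 : ε ^ 3 * ((∑ m ∈ Finset.Icc 1 N, ε ^ m * ‖iteratedFDeriv ℝ m Q y‖ / m ! * I m)
        + Cr * ε ^ (N + 1) * I (N + 1))
      = (∑ m ∈ Finset.Icc 1 N, ε ^ (3 + m) * ‖iteratedFDeriv ℝ m Q y‖ * (I m / m !))
        + ε ^ (4 + N) * (Cr * I (N + 1)) := by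
    rw [mul_add, Finset.mul_sum, hp]
    congr 1
    · exact Finset.sum_congr rfl fun m _ => by rw [pow_add]; ring
    · ring
  rw [e7]
  have e8 : (∑ m ∈ Finset.Icc 1 N, ε ^ (3 + m) * ‖iteratedFDeriv ℝ m Q y‖ * (I m / m !))
        + ε ^ (4 + N) * (Cr * I (N + 1))
      ≤ (∑ m ∈ Finset.Icc 1 N, ε ^ (3 + m) * ‖iteratedFDeriv ℝ m Q y‖ * C)
        + ε ^ (4 + N) * C := by
    refine add_le_add (Finset.sum_le_sum fun m hm => ?_) ?_
    · exact mul_le_mul_of_nonneg_left (hC1 m hm) (by positivity)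
    · exact mul_le_mul_of_nonneg_left hC2 (by positivity)
  refine e8.trans (le_of_eq ?_)
  rw [← Finset.sum_mul]
  ring

end
end
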